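/- arXiv:2306.13371 — 8 statements merged into one kernel-verified Lean document; each statement's English description precedes it below -/
import Mathlib

section
/- Let ρ ∈ (−1,1) and let U, V be independent standard Gaussian real random variables on a probability space; set Z = V and Y = ρ·V + √(1−ρ²)·U (so (Y,Z) is a centered bivariate Gaussian vector with unit variances and correlation ρ). Then P(Y > 0 and Z ≤ 0) = 1/4 − (1/(2π))·arctan(ρ/√(1−ρ²)). -/
open MeasureTheory ProbabilityTheory Real Set

namespace GaussQuadAux

lemma hasDerivAt_negexp (x : ℝ) :
    HasDerivAt (fun r : ℝ => -rexp (-(r ^ 2 / 2))) (x * rexp (-(x ^ 2 / 2))) x := by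
  have h1 : HasDerivAt (fun r : ℝ => -(r ^ 2 / 2)) (-x) x := by
    have := ((hasDerivAt_pow 2 x).div_const 2).neg
    simpa [Pi.neg_def] using this
  have h2 := h1.exp.neg
  exact h2.congr_deriv (by ring)

lemma radial_integral : (∫ r in Ioi (0:ℝ), r * rexp (-(r ^ 2 / 2))) = 1 := by
  have hint : IntegrableOn (fun r : ℝ => r * rexp (-(r ^ 2 / 2))) (Ioi 0) := by
    have h := integrableOn_rpow_mul_exp_neg_mul_sq (b := 1/2) (by norm_num) (s := 1) (by norm_num)
    refine h.congr_fun (fun x _ => ?_) measurableSet_Ioi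
    simp only [Real.rpow_one]
    ring_nf
  have htend : Filter.Tendsto (fun r : ℝ => -rexp (-(r ^ 2 / 2))) Filter.atTop (nhds 0) := by
    rw [← neg_zero]
    refine Filter.Tendsto.neg ?_
    apply Real.tendsto_exp_atBot.comp
    have h1 : Filter.Tendsto (fun r : ℝ => r ^ 2 / 2) Filter.atTop Filter.atTop :=
      (Filter.tendsto_pow_atTop two_ne_zero).atTop_div_const (by norm_num)
    exact Filter.tendsto_neg_atBot_iff.mpr h1
  have := integral_Ioi_of_hasDerivAt_of_tendsto' (fun x _ => hasDerivAt_negexp x) hint htend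
  simpa using this

lemma angle_iff {α θ : ℝ} (hα : α ∈ Ioo (-(π/2)) (π/2)) (hθ : θ ∈ Ioo (-π) π) :
    (0 < Real.sin α * Real.sin θ + Real.cos α * Real.cos θ ∧ Real.sin θ ≤ 0) ↔
      θ ∈ Ioc (α - π/2) 0 := by
  have hπ := Real.pi_pos
  rw [show Real.sin α * Real.sin θ + Real.cos α * Real.cos θ = Real.cos (θ - α) by
    rw [Real.cos_sub]; ring]
  constructor
  · rintro ⟨hcos, hsin⟩
    have hθ0 : θ ≤ 0 := by
      by_contra h
      push_neg at h
      exact absurd (Real.sin_pos_of_pos_of_lt_pi h hθ.2) (not_lt.2 hsin)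
    refine ⟨?_, hθ0⟩
    by_contra h
    push_neg at h
    have h1 : π/2 ≤ -(θ - α) := by linarith
    have h2 : -(θ - α) ≤ π + π/2 := by linarith [hθ.1, hα.2]
    have := Real.cos_nonpos_of_pi_div_two_le_of_le h1 h2
    rw [Real.cos_neg] at this
    linarith
  · rintro ⟨h1, h2⟩
    refine ⟨?_, Real.sin_nonpos_of_nonpos_of_neg_pi_le h2 (by linarith [hα.1])⟩
    apply Real.cos_pos_of_mem_Ioo
    constructor
    · linarith
    · linarith [hα.1]

lemma gaussian_prod_eq :
    (gaussianReal 0 1).prod (gaussianReal 0 1)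
      = (volume : Measure (ℝ × ℝ)).withDensity
          (fun p => gaussianPDF 0 1 p.1 * gaussianPDF 0 1 p.2) := by
  have h1 : gaussianReal 0 1 = volume.withDensity (gaussianPDF 0 1) :=
    gaussianReal_of_var_ne_zero 0 one_ne_zero
  refine Measure.prod_eq fun s t hs ht => ?_
  rw [withDensity_apply _ (hs.prod ht), Measure.volume_eq_prod, ← Measure.prod_restrict,
    lintegral_prod_mul (measurable_gaussianPDF 0 1).aemeasurable
      (measurable_gaussianPDF 0 1).aemeasurable]
  rw [h1, withDensity_apply _ hs, withDensity_apply _ ht]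

lemma gaussPDF_prod (p : ℝ × ℝ) :
    gaussianPDFReal 0 1 p.1 * gaussianPDFReal 0 1 p.2
      = (2 * π)⁻¹ * rexp (-((p.1 ^ 2 + p.2 ^ 2) / 2)) := by
  have h2π : (0:ℝ) ≤ 2 * π := by positivity
  simp only [gaussianPDFReal, NNReal.coe_one, mul_one, sub_zero]
  rw [show ((2 * π)⁻¹ : ℝ) = (√(2*π))⁻¹ * (√(2*π))⁻¹ by
    rw [← mul_inv, Real.mul_self_sqrt h2π]]
  rw [show -((p.1 ^ 2 + p.2 ^ 2) / 2) = -p.1 ^ 2 / 2 + -p.2 ^ 2 / 2 by ring, Real.exp_add]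
  ring

lemma main_measure (ρ : ℝ) (hρ : ρ ∈ Set.Ioo (-1:ℝ) 1) :
    (((gaussianReal 0 1).prod (gaussianReal 0 1))
      {p : ℝ × ℝ | 0 < ρ * p.2 + Real.sqrt (1 - ρ ^ 2) * p.1 ∧ p.2 ≤ 0}).toReal
    = 1/4 - 1/(2*π) * Real.arcsin ρ := by
  have hπ := Real.pi_pos
  set α := Real.arcsin ρ with hαdef
  have hsin : Real.sin α = ρ := Real.sin_arcsin hρ.1.le hρ.2.le
  have hcos : Real.cos α = Real.sqrt (1 - ρ ^ 2) := Real.cos_arcsin ρ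
  have hα : α ∈ Ioo (-(π/2)) (π/2) :=
    ⟨Real.neg_pi_div_two_lt_arcsin.2 hρ.1, Real.arcsin_lt_pi_div_two.2 hρ.2⟩
  set S : Set (ℝ × ℝ) := {p | 0 < ρ * p.2 + Real.sqrt (1 - ρ ^ 2) * p.1 ∧ p.2 ≤ 0} with hSdef
  have hSm : MeasurableSet S :=
    (measurableSet_lt measurable_const ((measurable_snd.const_mul ρ).add
      (measurable_fst.const_mul _))).inter (measurableSet_le measurable_snd measurable_const)
  set d : ℝ × ℝ → ℝ := fun p => gaussianPDFReal 0 1 p.1 * gaussianPDFReal 0 1 p.2 with hddef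
  have hd_int : Integrable d (volume : Measure (ℝ × ℝ)) := by
    rw [Measure.volume_eq_prod]
    exact (integrable_gaussianPDFReal 0 1).mul_prod (integrable_gaussianPDFReal 0 1)
  have hd_nonneg : ∀ p, 0 ≤ d p := fun p =>
    mul_nonneg (gaussianPDFReal_nonneg 0 1 p.1) (gaussianPDFReal_nonneg 0 1 p.2)
  have hμS : ((gaussianReal 0 1).prod (gaussianReal 0 1)) S
      = ENNReal.ofReal (∫ p in S, d p) := by
    rw [gaussian_prod_eq, withDensity_apply _ hSm,
      ofReal_integral_eq_lintegral_ofReal hd_int.integrableOn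
        (Filter.Eventually.of_forall hd_nonneg)]
    refine lintegral_congr fun p => ?_
    rw [gaussianPDF, gaussianPDF, ← ENNReal.ofReal_mul (gaussianPDFReal_nonneg 0 1 p.1)]
  have hTm : MeasurableSet (Ioc (α - π/2) (0:ℝ)) := measurableSet_Ioc
  have key : (∫ p in S, d p ∂(volume : Measure (ℝ × ℝ)))
      = (∫ r in Ioi (0:ℝ), r * ((2*π)⁻¹ * rexp (-(r ^ 2 / 2))))
        * ∫ θ in Ioo (-π) π, (Ioc (α - π/2) 0).indicator (fun _ => (1:ℝ)) θ := by
    rw [← integral_indicator hSm, ← integral_comp_polarCoord_symm]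
    rw [show polarCoord.target = Ioi (0:ℝ) ×ˢ Ioo (-π) π from rfl]
    rw [Measure.volume_eq_prod, ← setIntegral_prod_mul]
    refine setIntegral_congr_fun (measurableSet_Ioi.prod measurableSet_Ioo) fun p hp => ?_
    obtain ⟨hr, hθ⟩ := hp
    simp only [mem_Ioi] at hr
    have hsymm : polarCoord.symm p = (p.1 * Real.cos p.2, p.1 * Real.sin p.2) := rfl
    have hmem : polarCoord.symm p ∈ S ↔ p.2 ∈ Ioc (α - π/2) 0 := by
      rw [hsymm, hSdef]
      simp only [mem_setOf_eq]
      rw [← angle_iff hα hθ]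
      constructor
      · rintro ⟨h1, h2⟩
        rw [hsin, hcos]
        constructor
        · by_contra hc
          push_neg at hc
          nlinarith
        · by_contra hc
          push_neg at hc
          nlinarith
      · rintro ⟨h1, h2⟩
        rw [hsin, hcos] at h1
        constructor
        · nlinarith
        · exact mul_nonpos_of_nonneg_of_nonpos hr.le h2
    have hdval : d (polarCoord.symm p) = (2*π)⁻¹ * rexp (-(p.1 ^ 2 / 2)) := by
      have hsq : ((polarCoord.symm p).1 ^ 2 + (polarCoord.symm p).2 ^ 2) = p.1 ^ 2 := by
        rw [hsymm]
        simp only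
        rw [mul_pow, mul_pow, ← mul_add, Real.cos_sq_add_sin_sq, mul_one]
      rw [hddef]
      dsimp only
      rw [gaussPDF_prod, hsq]
    by_cases hmem2 : p.2 ∈ Ioc (α - π/2) 0
    · rw [Set.indicator_of_mem (hmem.mpr hmem2) d, Set.indicator_of_mem hmem2, hdval,
        smul_eq_mul]
      ring
    · rw [Set.indicator_of_notMem (fun hc => hmem2 (hmem.mp hc)),
        Set.indicator_of_notMem hmem2, smul_eq_mul]
      ring
  have hrad : (∫ r in Ioi (0:ℝ), r * ((2*π)⁻¹ * rexp (-(r ^ 2 / 2)))) = (2*π)⁻¹ := by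
    simp_rw [show ∀ r : ℝ, r * ((2*π)⁻¹ * rexp (-(r ^ 2 / 2)))
        = (2*π)⁻¹ * (r * rexp (-(r ^ 2 / 2))) from fun r => by ring]
    rw [integral_const_mul, radial_integral, mul_one]
  have hang : (∫ θ in Ioo (-π) π, (Ioc (α - π/2) 0).indicator (fun _ => (1:ℝ)) θ)
      = π/2 - α := by
    rw [setIntegral_indicator hTm]
    have hsub : Ioo (-π) π ∩ Ioc (α - π/2) 0 = Ioc (α - π/2) 0 := by
      apply inter_eq_self_of_subset_right
      intro x hx
      exact ⟨by linarith [hx.1, hα.1], by linarith [hx.2]⟩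
    rw [hsub, setIntegral_const, Real.volume_real_Ioc_of_le (by linarith [hα.2] : α - π/2 ≤ 0), smul_eq_mul, mul_one]
    ring
  rw [hμS, ENNReal.toReal_ofReal (integral_nonneg hd_nonneg), key, hrad, hang]
  field_simp
  ring

end GaussQuadAux
/-- For a centered bivariate Gaussian pair `(Y, Z)` with unit variances and correlation
`ρ ∈ (-1, 1)`, built from independent standard Gaussians `U, V` as `Z = V` and
`Y = ρ V + √(1-ρ²) U`, we have
`P(Y > 0 ∧ Z ≤ 0) = 1/4 - (1/(2π)) arctan(ρ/√(1-ρ²))`. -/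
theorem gaussian_quadrant_probability
    {Ω : Type*} [MeasurableSpace Ω] (P : Measure Ω) [IsProbabilityMeasure P]
    (ρ : ℝ) (hρ : ρ ∈ Set.Ioo (-1 : ℝ) 1)
    (U V : Ω → ℝ) (hUm : Measurable U) (hVm : Measurable V)
    (hU : P.map U = gaussianReal 0 1) (hV : P.map V = gaussianReal 0 1)
    (hUV : IndepFun U V P)
    (Y Z : Ω → ℝ)
    (hY : Y = fun ω => ρ * V ω + Real.sqrt (1 - ρ ^ 2) * U ω)
    (hZ : Z = V) :
    (P {ω | 0 < Y ω ∧ Z ω ≤ 0}).toReal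
      = 1 / 4 - 1 / (2 * π) * Real.arctan (ρ / Real.sqrt (1 - ρ ^ 2)) := by
  have hSm : MeasurableSet
      {p : ℝ × ℝ | 0 < ρ * p.2 + Real.sqrt (1 - ρ ^ 2) * p.1 ∧ p.2 ≤ 0} :=
    (measurableSet_lt measurable_const ((measurable_snd.const_mul ρ).add
      (measurable_fst.const_mul _))).inter (measurableSet_le measurable_snd measurable_const)
  have hW : P.map (fun ω => (U ω, V ω)) = (gaussianReal 0 1).prod (gaussianReal 0 1) := by
    rw [(ProbabilityTheory.indepFun_iff_map_prod_eq_prod_map_map hUm.aemeasurable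
      hVm.aemeasurable).1 hUV, hU, hV]
  have hpre : {ω | 0 < Y ω ∧ Z ω ≤ 0}
      = (fun ω => (U ω, V ω)) ⁻¹'
        {p : ℝ × ℝ | 0 < ρ * p.2 + Real.sqrt (1 - ρ ^ 2) * p.1 ∧ p.2 ≤ 0} := by
    ext ω
    simp [hY, hZ]
  rw [hpre, ← Measure.map_apply (hUm.prodMk hVm) hSm, hW,
    GaussQuadAux.main_measure ρ hρ, ← Real.arcsin_eq_arctan hρ]
end

section
/- Let ρ ∈ (−1,1) and let U, V be independent standard Gaussian real random variables on a probability space; set Z = V and Y = ρ·V + √(1−ρ²)·U. Then P(Y > 0 | Z ≤ 0) = 1/2 − (1/π)·arctan(ρ/√(1−ρ²)) and P(Y > 0 | Z > 0) = 1/2 + (1/π)·arctan(ρ/√(1−ρ²)). -/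
open MeasureTheory ProbabilityTheory Real Set

lemma intIoi : ∫ r in Ioi (0:ℝ), r * rexp (-r ^ 2 / 2) = 1 := by
  have hderiv : ∀ x ∈ Ici (0:ℝ), HasDerivAt (fun r : ℝ => -rexp (-r ^ 2 / 2))
      (x * rexp (-x ^ 2 / 2)) x := by
    intro x _
    have h1 : HasDerivAt (fun r : ℝ => -r ^ 2 / 2) (-x) x := by
      have := ((hasDerivAt_pow 2 x).neg).div_const 2
      simpa using this.congr_deriv (by ring)
    have := (h1.exp).neg
    exact this.congr_deriv (by ring)
  have hint : IntegrableOn (fun r : ℝ => r * rexp (-r ^ 2 / 2)) (Ioi 0) := by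
    have := (integrable_mul_exp_neg_mul_sq (b := 1/2) (by norm_num)).integrableOn (s := Ioi 0)
    refine this.congr_fun ?_ measurableSet_Ioi
    intro x _; ring_nf
  have htend : Filter.Tendsto (fun r : ℝ => -rexp (-r ^ 2 / 2)) Filter.atTop (nhds 0) := by
    rw [show (0:ℝ) = -0 by ring]
    refine Filter.Tendsto.neg ?_
    refine Real.tendsto_exp_atBot.comp ?_
    apply Filter.Tendsto.atBot_div_const (by norm_num)
    exact Filter.tendsto_neg_atBot_iff.mpr (Filter.tendsto_pow_atTop (n := 2) (by norm_num))
  have := integral_Ioi_of_hasDerivAt_of_tendsto' hderiv hint htend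
  simpa using this

lemma gauss_prod_withDensity :
    (gaussianReal 0 1).prod (gaussianReal 0 1) =
      (volume : Measure (ℝ × ℝ)).withDensity
        (fun p => gaussianPDF 0 1 p.1 * gaussianPDF 0 1 p.2) := by
  refine Measure.prod_eq fun s t hs ht => ?_
  rw [withDensity_apply _ (hs.prod ht), Measure.volume_eq_prod, ← Measure.prod_restrict,
    lintegral_prod_mul (measurable_gaussianPDF 0 1).aemeasurable
      (measurable_gaussianPDF 0 1).aemeasurable,
    gaussianReal_apply 0 one_ne_zero s, gaussianReal_apply 0 one_ne_zero t]

lemma cone_measure {S : Set (ℝ × ℝ)} (hS : MeasurableSet S) {t : Set ℝ} (ht : MeasurableSet t)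
    (hsub : t ⊆ Ioo (-π) π)
    (hc : ∀ r θ : ℝ, 0 < r → θ ∈ Ioo (-π) π → ((r * cos θ, r * sin θ) ∈ S ↔ θ ∈ t)) :
    (gaussianReal 0 1).prod (gaussianReal 0 1) S
      = ENNReal.ofReal ((volume t).toReal / (2 * π)) := by
  have h2π : (0:ℝ) ≤ 2 * π := by positivity
  set G : ℝ × ℝ → ℝ := fun p => gaussianPDFReal 0 1 p.1 * gaussianPDFReal 0 1 p.2 with hG
  have hGnn : ∀ p, 0 ≤ G p := fun p =>
    mul_nonneg (gaussianPDFReal_nonneg _ _ _) (gaussianPDFReal_nonneg _ _ _)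
  have hGint : Integrable G := by
    rw [show (volume : Measure (ℝ × ℝ)) = Measure.prod volume volume from Measure.volume_eq_prod ℝ ℝ]
    exact (integrable_gaussianPDFReal 0 1).mul_prod (integrable_gaussianPDFReal 0 1)
  rw [gauss_prod_withDensity, withDensity_apply _ hS]
  have hstep : ∫⁻ p in S, gaussianPDF 0 1 p.1 * gaussianPDF 0 1 p.2
      = ENNReal.ofReal (∫ p in S, G p) := by
    rw [ofReal_integral_eq_lintegral_ofReal (hGint.restrict) (ae_of_all _ hGnn)]
    congr 1 with p
    rw [gaussianPDF, gaussianPDF, ← ENNReal.ofReal_mul (gaussianPDFReal_nonneg _ _ _)]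
  rw [hstep]
  congr 1
  have hg1 : ∀ x : ℝ, gaussianPDFReal 0 1 x = (√(2 * π))⁻¹ * rexp (-x ^ 2 / 2) := by
    intro x; simp [gaussianPDFReal]
  rw [← integral_indicator hS, ← integral_comp_polarCoord_symm (S.indicator G)]
  have hTm : MeasurableSet polarCoord.target := measurableSet_Ioi.prod measurableSet_Ioo
  have key : ∀ p ∈ polarCoord.target,
      p.1 • (S.indicator G) (polarCoord.symm p)
        = ((Ioi (0:ℝ)) ×ˢ t).indicator (fun q => q.1 * ((2 * π)⁻¹ * rexp (-q.1 ^ 2 / 2))) p := by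
    rintro ⟨r, θ⟩ hp
    rw [polarCoord_target] at hp
    obtain ⟨hr, hθ⟩ := hp
    simp only [mem_Ioi] at hr
    have hmem : (polarCoord.symm (r, θ)) ∈ S ↔ θ ∈ t := by
      rw [polarCoord_symm_apply]; exact hc r θ hr hθ
    have hGval : G (polarCoord.symm (r, θ)) = (2 * π)⁻¹ * rexp (-r ^ 2 / 2) := by
      rw [polarCoord_symm_apply]
      have hexp : rexp (-(r * cos θ) ^ 2 / 2) * rexp (-(r * sin θ) ^ 2 / 2)
          = rexp (-r ^ 2 / 2) := by
        rw [← Real.exp_add]; congr 1; nlinarith [sin_sq_add_cos_sq θ]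
      have hA : ((√(2 * π))⁻¹) * ((√(2 * π))⁻¹) = (2 * π)⁻¹ := by
        rw [← mul_inv, Real.mul_self_sqrt h2π]
      calc G (r * cos θ, r * sin θ)
          = ((√(2 * π))⁻¹ * (√(2 * π))⁻¹)
            * (rexp (-(r * cos θ) ^ 2 / 2) * rexp (-(r * sin θ) ^ 2 / 2)) := by
            simp only [hG, hg1]; ring
        _ = (2 * π)⁻¹ * rexp (-r ^ 2 / 2) := by rw [hA, hexp]
    by_cases hmt : θ ∈ t
    · rw [Set.indicator_of_mem (hmem.mpr hmt), Set.indicator_of_mem (show (r, θ) ∈ Ioi (0:ℝ) ×ˢ t from ⟨hr, hmt⟩),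
        hGval, smul_eq_mul]
    · rw [Set.indicator_of_notMem (fun h => hmt (hmem.mp h)),
        Set.indicator_of_notMem (fun h => hmt (h : (r, θ) ∈ Ioi (0:ℝ) ×ˢ t).2), smul_zero]
  rw [setIntegral_congr_fun hTm key, setIntegral_indicator (measurableSet_Ioi.prod ht)]
  have hinter : polarCoord.target ∩ (Ioi 0 ×ˢ t) = Ioi 0 ×ˢ t := by
    rw [polarCoord_target]
    exact inter_eq_right.mpr (prod_mono_right hsub)
  rw [hinter]
  have : ∫ q in Ioi (0:ℝ) ×ˢ t, q.1 * ((2 * π)⁻¹ * rexp (-q.1 ^ 2 / 2))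
      = (∫ r in Ioi (0:ℝ), r * ((2 * π)⁻¹ * rexp (-r ^ 2 / 2))) * ∫ θ in t, (1:ℝ) := by
    rw [show (volume : Measure (ℝ × ℝ)) = Measure.prod volume volume from Measure.volume_eq_prod ℝ ℝ,
      ← setIntegral_prod_mul (fun r : ℝ => r * ((2 * π)⁻¹ * rexp (-r ^ 2 / 2)))
        (fun _ : ℝ => (1:ℝ))]
    simp
  rw [this]
  have h1 : ∫ r in Ioi (0:ℝ), r * ((2 * π)⁻¹ * rexp (-r ^ 2 / 2)) = (2 * π)⁻¹ := by
    have : ∀ r : ℝ, r * ((2 * π)⁻¹ * rexp (-r ^ 2 / 2)) = (2 * π)⁻¹ * (r * rexp (-r ^ 2 / 2)) :=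
      fun r => by ring
    simp_rw [this, integral_const_mul, intIoi, mul_one]
  have h2 : ∫ θ in t, (1:ℝ) = (volume t).toReal := by
    rw [setIntegral_const, smul_eq_mul, mul_one, measureReal_def]
  rw [h1, h2, div_eq_inv_mul]

lemma trig_pos {a θ : ℝ} (ha1 : -(π/2) < a) (ha2 : a < π/2) (hθ1 : -π < θ) (hθ2 : θ < π) :
    (0 < Real.cos (θ - a) ∧ 0 < Real.sin θ) ↔ θ ∈ Ioo 0 (a + π/2) := by
  constructor
  · rintro ⟨hcos, hsin⟩
    constructor
    · by_contra h
      push_neg at h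
      exact absurd hsin (not_lt.mpr (Real.sin_nonpos_of_nonpos_of_neg_pi_le h hθ1.le))
    · by_contra h
      push_neg at h
      have : Real.cos (θ - a) ≤ 0 :=
        Real.cos_nonpos_of_pi_div_two_le_of_le (by linarith) (by linarith)
      linarith
  · rintro ⟨h1, h2⟩
    exact ⟨Real.cos_pos_of_mem_Ioo ⟨by linarith, by linarith⟩,
      Real.sin_pos_of_pos_of_lt_pi h1 (by linarith)⟩

lemma trig_neg {a θ : ℝ} (ha1 : -(π/2) < a) (ha2 : a < π/2) (hθ1 : -π < θ) (hθ2 : θ < π) :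
    (0 < Real.cos (θ - a) ∧ Real.sin θ ≤ 0) ↔ θ ∈ Ioc (a - π/2) 0 := by
  constructor
  · rintro ⟨hcos, hsin⟩
    constructor
    · by_contra h
      push_neg at h
      rw [show θ - a = -(a - θ) by ring, Real.cos_neg] at hcos
      have : Real.cos (a - θ) ≤ 0 :=
        Real.cos_nonpos_of_pi_div_two_le_of_le (by linarith) (by linarith)
      linarith
    · by_contra h
      push_neg at h
      exact absurd hsin (not_le.mpr (Real.sin_pos_of_pos_of_lt_pi h hθ2))
  · rintro ⟨h1, h2⟩
    exact ⟨Real.cos_pos_of_mem_Ioo ⟨by linarith, by linarith⟩,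
      Real.sin_nonpos_of_nonpos_of_neg_pi_le h2 hθ1.le⟩

lemma sin_pos_iff' {θ : ℝ} (h1 : -π < θ) (h2 : θ < π) : 0 < Real.sin θ ↔ θ ∈ Ioo 0 π := by
  constructor
  · intro h
    refine ⟨?_, h2⟩
    by_contra hh
    push_neg at hh
    exact absurd h (not_lt.mpr (Real.sin_nonpos_of_nonpos_of_neg_pi_le hh h1.le))
  · exact fun h => Real.sin_pos_of_pos_of_lt_pi h.1 h.2

lemma sin_nonpos_iff' {θ : ℝ} (h1 : -π < θ) (h2 : θ < π) : Real.sin θ ≤ 0 ↔ θ ∈ Ioc (-π) 0 := by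
  constructor
  · intro h
    refine ⟨h1, ?_⟩
    by_contra hh
    push_neg at hh
    exact absurd h (not_le.mpr (Real.sin_pos_of_pos_of_lt_pi hh h2))
  · exact fun h => Real.sin_nonpos_of_nonpos_of_neg_pi_le h.2 h1.le

/-- For a centered bivariate Gaussian pair `(Y, Z)` with unit variances and correlation
`ρ ∈ (-1, 1)`, built from independent standard Gaussians `U, V` as `Z = V` and
`Y = ρ V + √(1-ρ²) U`, we have
`P(Y > 0 | Z ≤ 0) = 1/2 - (1/π) arctan(ρ/√(1-ρ²))` and
`P(Y > 0 | Z > 0) = 1/2 + (1/π) arctan(ρ/√(1-ρ²))`,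
where `P(A|B) = P(A ∩ B)/P(B)`. -/
theorem gaussian_conditional_probabilities
    {Ω : Type*} [MeasurableSpace Ω] (P : Measure Ω) [IsProbabilityMeasure P]
    (ρ : ℝ) (hρ : ρ ∈ Set.Ioo (-1 : ℝ) 1)
    (U V : Ω → ℝ) (hUm : Measurable U) (hVm : Measurable V)
    (hU : P.map U = gaussianReal 0 1) (hV : P.map V = gaussianReal 0 1)
    (hUV : IndepFun U V P)
    (Y Z : Ω → ℝ)
    (hY : Y = fun ω => ρ * V ω + Real.sqrt (1 - ρ ^ 2) * U ω)
    (hZ : Z = V) :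
    (P ({ω | 0 < Y ω} ∩ {ω | Z ω ≤ 0})).toReal / (P {ω | Z ω ≤ 0}).toReal
        = 1 / 2 - 1 / π * Real.arctan (ρ / Real.sqrt (1 - ρ ^ 2)) ∧
      (P ({ω | 0 < Y ω} ∩ {ω | 0 < Z ω})).toReal / (P {ω | 0 < Z ω}).toReal
        = 1 / 2 + 1 / π * Real.arctan (ρ / Real.sqrt (1 - ρ ^ 2)) := by
  obtain ⟨hρ1, hρ2⟩ := hρ
  have hρsq : ρ ^ 2 < 1 := by nlinarith
  set c := Real.sqrt (1 - ρ ^ 2) with hcdef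
  have hcpos : 0 < c := Real.sqrt_pos.mpr (by nlinarith)
  have hcsq : c ^ 2 = 1 - ρ ^ 2 := Real.sq_sqrt (by nlinarith)
  set a := Real.arctan (ρ / c) with hadef
  have ha1 : -(π/2) < a := Real.neg_pi_div_two_lt_arctan _
  have ha2 : a < π/2 := Real.arctan_lt_pi_div_two _
  have hπ : (0:ℝ) < π := Real.pi_pos
  have hsqrt : Real.sqrt (1 + (ρ/c)^2) = 1/c := by
    rw [show 1 + (ρ/c)^2 = (1/c)^2 by field_simp; nlinarith]
    exact Real.sqrt_sq (by positivity)
  have hcos : Real.cos a = c := by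
    rw [hadef, Real.cos_arctan, hsqrt]
    field_simp
  have hsin : Real.sin a = ρ := by
    rw [hadef, Real.sin_arctan, hsqrt]
    field_simp
  -- joint law of (U, V)
  have hmap : P.map (fun ω => (U ω, V ω)) = (gaussianReal 0 1).prod (gaussianReal 0 1) := by
    have h := (indepFun_iff_map_prod_eq_prod_map_map hUm.aemeasurable hVm.aemeasurable).mp hUV
    rw [hU, hV] at h
    exact h
  have hpairm : Measurable fun ω => (U ω, V ω) := hUm.prodMk hVm
  have hlin : Measurable fun p : ℝ × ℝ => ρ * p.2 + c * p.1 :=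
    (measurable_snd.const_mul ρ).add (measurable_fst.const_mul c)
  have hS1m : MeasurableSet {p : ℝ × ℝ | 0 < ρ * p.2 + c * p.1 ∧ 0 < p.2} :=
    (measurableSet_lt measurable_const hlin).inter (measurableSet_lt measurable_const measurable_snd)
  have hS2m : MeasurableSet {p : ℝ × ℝ | 0 < ρ * p.2 + c * p.1 ∧ p.2 ≤ 0} :=
    (measurableSet_lt measurable_const hlin).inter (measurableSet_le measurable_snd measurable_const)
  have hT1m : MeasurableSet {p : ℝ × ℝ | 0 < p.2} :=
    measurableSet_lt measurable_const measurable_snd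
  have hT2m : MeasurableSet {p : ℝ × ℝ | p.2 ≤ 0} :=
    measurableSet_le measurable_snd measurable_const
  have harg : ∀ r θ : ℝ, 0 < r →
      (0 < ρ * (r * Real.sin θ) + c * (r * Real.cos θ) ↔ 0 < Real.cos (θ - a)) := by
    intro r θ hr
    have h : ρ * (r * Real.sin θ) + c * (r * Real.cos θ) = r * Real.cos (θ - a) := by
      rw [Real.cos_sub, hcos, hsin]; ring
    rw [h]
    exact ⟨fun h' => by nlinarith, fun h' => mul_pos hr h'⟩
  have hrpos : ∀ r s : ℝ, 0 < r → (0 < r * s ↔ 0 < s) :=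
    fun r s hr => ⟨fun h => by nlinarith, fun h => mul_pos hr h⟩
  have hrneg : ∀ r s : ℝ, 0 < r → (r * s ≤ 0 ↔ s ≤ 0) :=
    fun r s hr => ⟨fun h => by nlinarith, fun h => mul_nonpos_of_nonneg_of_nonpos hr.le h⟩
  -- the four cone measures
  have hm1 : (gaussianReal 0 1).prod (gaussianReal 0 1) {p : ℝ × ℝ | 0 < ρ * p.2 + c * p.1 ∧ 0 < p.2}
      = ENNReal.ofReal ((a + π/2) / (2*π)) := by
    rw [cone_measure hS1m (t := Ioo 0 (a + π/2)) measurableSet_Ioo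
      (fun x hx => ⟨by simp only [mem_Ioo] at hx; linarith [hx.1], by simp only [mem_Ioo] at hx; linarith [hx.2]⟩)
      (by
        intro r θ hr hθ
        obtain ⟨hθ1, hθ2⟩ := hθ
        simp only [mem_setOf_eq]
        rw [harg r θ hr, hrpos r _ hr]
        exact trig_pos ha1 ha2 hθ1 hθ2)]
    rw [Real.volume_Ioo, ENNReal.toReal_ofReal (by linarith)]
    norm_num
  have hm2 : (gaussianReal 0 1).prod (gaussianReal 0 1) {p : ℝ × ℝ | 0 < ρ * p.2 + c * p.1 ∧ p.2 ≤ 0}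
      = ENNReal.ofReal ((π/2 - a) / (2*π)) := by
    rw [cone_measure hS2m (t := Ioc (a - π/2) 0) measurableSet_Ioc
      (fun x hx => ⟨by simp only [mem_Ioc] at hx; linarith [hx.1], by simp only [mem_Ioc] at hx; linarith [hx.2]⟩)
      (by
        intro r θ hr hθ
        obtain ⟨hθ1, hθ2⟩ := hθ
        simp only [mem_setOf_eq]
        rw [harg r θ hr, hrneg r _ hr]
        exact trig_neg ha1 ha2 hθ1 hθ2)]
    rw [Real.volume_Ioc, ENNReal.toReal_ofReal (by linarith)]
    norm_num
  have hm3 : (gaussianReal 0 1).prod (gaussianReal 0 1) {p : ℝ × ℝ | 0 < p.2}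
      = ENNReal.ofReal (π / (2*π)) := by
    rw [cone_measure hT1m (t := Ioo 0 π) measurableSet_Ioo
      (fun x hx => ⟨by simp only [mem_Ioo] at hx; linarith [hx.1], hx.2⟩)
      (by
        intro r θ hr hθ
        obtain ⟨hθ1, hθ2⟩ := hθ
        simp only [mem_setOf_eq]
        rw [hrpos r _ hr]
        exact sin_pos_iff' hθ1 hθ2)]
    rw [Real.volume_Ioo, ENNReal.toReal_ofReal (by linarith)]
    norm_num
  have hm4 : (gaussianReal 0 1).prod (gaussianReal 0 1) {p : ℝ × ℝ | p.2 ≤ 0}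
      = ENNReal.ofReal (π / (2*π)) := by
    rw [cone_measure hT2m (t := Ioc (-π) 0) measurableSet_Ioc
      (fun x hx => ⟨hx.1, by simp only [mem_Ioc] at hx; linarith [hx.2]⟩)
      (by
        intro r θ hr hθ
        obtain ⟨hθ1, hθ2⟩ := hθ
        simp only [mem_setOf_eq]
        rw [hrneg r _ hr]
        exact sin_nonpos_iff' hθ1 hθ2)]
    rw [Real.volume_Ioc, ENNReal.toReal_ofReal (by linarith)]
    norm_num
  -- translate events
  simp only [hY, hZ]
  have hP1 : P ({ω | 0 < ρ * V ω + c * U ω} ∩ {ω | 0 < V ω})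
      = ENNReal.ofReal ((a + π/2) / (2*π)) := by
    rw [show {ω | 0 < ρ * V ω + c * U ω} ∩ {ω | 0 < V ω}
        = (fun ω => (U ω, V ω)) ⁻¹' {p : ℝ × ℝ | 0 < ρ * p.2 + c * p.1 ∧ 0 < p.2} from rfl,
      ← Measure.map_apply hpairm hS1m, hmap, hm1]
  have hP2 : P ({ω | 0 < ρ * V ω + c * U ω} ∩ {ω | V ω ≤ 0})
      = ENNReal.ofReal ((π/2 - a) / (2*π)) := by
    rw [show {ω | 0 < ρ * V ω + c * U ω} ∩ {ω | V ω ≤ 0}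
        = (fun ω => (U ω, V ω)) ⁻¹' {p : ℝ × ℝ | 0 < ρ * p.2 + c * p.1 ∧ p.2 ≤ 0} from rfl,
      ← Measure.map_apply hpairm hS2m, hmap, hm2]
  have hP3 : P {ω | 0 < V ω} = ENNReal.ofReal (π / (2*π)) := by
    rw [show {ω | 0 < V ω} = (fun ω => (U ω, V ω)) ⁻¹' {p : ℝ × ℝ | 0 < p.2} from rfl,
      ← Measure.map_apply hpairm hT1m, hmap, hm3]
  have hP4 : P {ω | V ω ≤ 0} = ENNReal.ofReal (π / (2*π)) := by
    rw [show {ω | V ω ≤ 0} = (fun ω => (U ω, V ω)) ⁻¹' {p : ℝ × ℝ | p.2 ≤ 0} from rfl,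
      ← Measure.map_apply hpairm hT2m, hmap, hm4]
  constructor
  · rw [hP2, hP4, ENNReal.toReal_ofReal (div_nonneg (by linarith) (by positivity)),
      ENNReal.toReal_ofReal (div_nonneg (by linarith) (by positivity))]
    rw [div_div_div_cancel_right₀]
    · field_simp
      try ring
    · positivity
  · rw [hP1, hP3, ENNReal.toReal_ofReal (div_nonneg (by linarith) (by positivity)),
      ENNReal.toReal_ofReal (div_nonneg (by linarith) (by positivity))]
    rw [div_div_div_cancel_right₀]
    · field_simp
      try ring
    · positivity
end

section
/- Let 𝓗 ∈ (0,1), σ > 0, θ > 0, and let (B_u)_{u>0} be a family of centered square-integrable real random variables with E[B_u·B_v] = (σ²/2)·(u^{2𝓗} + v^{2𝓗} − |u−v|^{2𝓗}) for all u,v > 0. Define the delampertized process X_t = e^{−𝓗θt}·B_{e^{θt}} for t ∈ ℝ. Then for all s ≤ t, E[X_s·X_t] = (σ²/2)·h(θ·(t−s)), where h(x) = 2·cosh(𝓗x) − (2·sinh(x/2))^{2𝓗}. In particular E[X_t²] = σ² for every t, so the covariance of X depends only on the time lag t − s. -/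
open MeasureTheory Real

lemma delamp_alg (H θ s t : ℝ) (hH : 0 < H) (hθ : 0 < θ) (hst : s ≤ t) :
    Real.exp (-(H * θ * s)) * Real.exp (-(H * θ * t)) *
      (Real.exp (θ * s) ^ (2 * H) + Real.exp (θ * t) ^ (2 * H) -
        |Real.exp (θ * s) - Real.exp (θ * t)| ^ (2 * H)) =
    2 * Real.cosh (H * (θ * (t - s))) - (2 * Real.sinh (θ * (t - s) / 2)) ^ (2 * H) := by
  have hle : Real.exp (θ * s) ≤ Real.exp (θ * t) :=
    Real.exp_le_exp.2 (by nlinarith)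
  have habs : |Real.exp (θ * s) - Real.exp (θ * t)| = Real.exp (θ * t) - Real.exp (θ * s) := by
    rw [abs_sub_comm, abs_of_nonneg (by linarith)]
  have h1 : Real.exp (θ * s) ^ (2 * H) = Real.exp (θ * s * (2 * H)) := (Real.exp_mul _ _).symm
  have h2 : Real.exp (θ * t) ^ (2 * H) = Real.exp (θ * t * (2 * H)) := (Real.exp_mul _ _).symm
  have h3 : Real.exp (-(H * θ * s)) * Real.exp (-(H * θ * t)) =
      Real.exp (-(θ * (s + t) / 2)) ^ (2 * H) := by
    rw [← Real.exp_mul, ← Real.exp_add]; ring_nf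
  have h4 : Real.exp (-(θ * (s + t) / 2)) ^ (2 * H) *
      (Real.exp (θ * t) - Real.exp (θ * s)) ^ (2 * H) =
      (2 * Real.sinh (θ * (t - s) / 2)) ^ (2 * H) := by
    rw [← Real.mul_rpow (Real.exp_pos _).le (by linarith)]
    congr 1
    rw [Real.sinh_eq, mul_sub, ← Real.exp_add, ← Real.exp_add]
    ring_nf
  rw [habs, h1, h2, mul_sub, mul_add, h3, h4, ← h3]
  rw [← Real.exp_add, ← Real.exp_add, Real.cosh_eq]
  ring_nf
  rw [← Real.exp_add]
  ring_nf

/-- If `(B_u)_{u>0}` is a centered square-integrable family with the fBm covariance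
`E[B_u B_v] = (σ²/2)(u^(2𝓗) + v^(2𝓗) - |u-v|^(2𝓗))`, then the delampertized process
`X_t = e^(-𝓗θt) B_{e^(θt)}` satisfies, for all `s ≤ t`,
`E[X_s X_t] = (σ²/2) h(θ(t-s))` with `h(x) = 2 cosh(𝓗x) - (2 sinh(x/2))^(2𝓗)`;
in particular `E[X_t²] = σ²` for every `t`. -/
theorem delampertized_fbm_covariance
    {Ω : Type*} [MeasurableSpace Ω] (P : Measure Ω) [IsProbabilityMeasure P]
    (H σ θ : ℝ) (hH : H ∈ Set.Ioo (0 : ℝ) 1) (hσ : 0 < σ) (hθ : 0 < θ)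
    (B : ℝ → Ω → ℝ)
    (hL2 : ∀ u : ℝ, 0 < u → MemLp (B u) 2 P)
    (hmean : ∀ u : ℝ, 0 < u → ∫ ω, B u ω ∂P = 0)
    (hcov : ∀ u v : ℝ, 0 < u → 0 < v →
      ∫ ω, B u ω * B v ω ∂P = σ ^ 2 / 2 * (u ^ (2 * H) + v ^ (2 * H) - |u - v| ^ (2 * H)))
    (X : ℝ → Ω → ℝ)
    (hX : ∀ t : ℝ, X t = fun ω => Real.exp (-(H * θ * t)) * B (Real.exp (θ * t)) ω)
    (h : ℝ → ℝ)
    (hh : ∀ x : ℝ, h x = 2 * Real.cosh (H * x) - (2 * Real.sinh (x / 2)) ^ (2 * H)) :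
    (∀ s t : ℝ, s ≤ t → ∫ ω, X s ω * X t ω ∂P = σ ^ 2 / 2 * h (θ * (t - s))) ∧
    (∀ t : ℝ, ∫ ω, X t ω ^ 2 ∂P = σ ^ 2) := by
  have key : ∀ s t : ℝ, s ≤ t → ∫ ω, X s ω * X t ω ∂P = σ ^ 2 / 2 * h (θ * (t - s)) := by
    intro s t hst
    have step1 : ∫ ω, X s ω * X t ω ∂P =
        Real.exp (-(H * θ * s)) * Real.exp (-(H * θ * t)) *
          ∫ ω, B (Real.exp (θ * s)) ω * B (Real.exp (θ * t)) ω ∂P := by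
      rw [← integral_const_mul]
      congr 1
      ext ω
      rw [hX s, hX t]
      ring
    rw [step1, hcov _ _ (Real.exp_pos _) (Real.exp_pos _), hh,
      show H * (θ * (t - s)) = H * (θ * (t - s)) from rfl]
    rw [show (σ ^ 2 / 2 : ℝ) * (2 * Real.cosh (H * (θ * (t - s))) -
        (2 * Real.sinh (θ * (t - s) / 2)) ^ (2 * H)) =
        σ ^ 2 / 2 * (2 * Real.cosh (H * (θ * (t - s))) -
        (2 * Real.sinh (θ * (t - s) / 2)) ^ (2 * H)) from rfl]
    rw [← delamp_alg H θ s t hH.1 hθ hst]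
    ring
  refine ⟨key, fun t => ?_⟩
  have h0 : h (θ * (t - t)) = 2 := by
    rw [hh]
    simp [Real.zero_rpow (ne_of_gt (mul_pos two_pos hH.1))]
  have := key t t le_rfl
  rw [h0] at this
  calc ∫ ω, X t ω ^ 2 ∂P = ∫ ω, X t ω * X t ω ∂P := by simp [sq]
    _ = σ ^ 2 := by rw [this]; ring
end

section
/- (Theorem 2.) Let 𝓗 ∈ (0,1), θ > 0, m > 0, set h(x) = 2·cosh(𝓗x) − (2·sinh(x/2))^{2𝓗} and ρ = (2 − h(2mθ))/(4 − 2·h(mθ)) − 1, and assume ρ ∈ (−1,1). Let U, V be independent standard Gaussian real random variables and set Z = V and Y = ρ·V + √(1−ρ²)·U, so that (Y,Z) has the joint law (up to a common positive scaling) of the consecutive increments (𝓧^{𝓗,θ}_{2m} − 𝓧^{𝓗,θ}_m, 𝓧^{𝓗,θ}_m − 𝓧^{𝓗,θ}_0) of a delampertized fractional Brownian motion. Then the market information I²_m := 1 − H(1_{Y>0} | 1_{Z>0}) satisfies I²_m = 1 + f(1/2 − (1/π)·arctan(ρ/√(1−ρ²))) + f(1/2 + (1/π)·arctan(ρ/√(1−ρ²))).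 -/
open MeasureTheory ProbabilityTheory Real

/-- `f x = x log₂ x`, with the convention `f 0 = 0`
(automatic in Lean since `Real.logb 2 0 = 0`). -/
noncomputable def f (x : ℝ) : ℝ := x * Real.logb 2 x

/-- The conditional Shannon entropy (base 2) `H(1_A | 1_B)` of the indicator of the event `A`
given the indicator of the event `B`:
`H(X|W) = -∑_w P(W=w) ∑_x P(X=x|W=w) log₂ P(X=x|W=w)`, with conditional probabilities
written as ratios `P(X=x ∩ W=w)/P(W=w)`. -/
noncomputable def condEntropyInd {Ω : Type*} [MeasurableSpace Ω] (P : Measure Ω)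
    (A B : Set Ω) : ℝ :=
  -((P B).toReal *
      (f ((P (A ∩ B)).toReal / (P B).toReal) + f ((P (Aᶜ ∩ B)).toReal / (P B).toReal)) +
    (P Bᶜ).toReal *
      (f ((P (A ∩ Bᶜ)).toReal / (P Bᶜ).toReal) + f ((P (Aᶜ ∩ Bᶜ)).toReal / (P Bᶜ).toReal)))

section AuxMarketInfo
open Set

lemma myint1 {b : ℝ} (hb : 0 < b) :
    ∫ x in Ioi (0:ℝ), x * rexp (-b * x ^ 2) = (2 * b)⁻¹ := by
  have hderiv : ∀ x ∈ Ici (0:ℝ), HasDerivAt (fun y : ℝ => -(2*b)⁻¹ * rexp (-b * y ^ 2))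
      (x * rexp (-b * x ^ 2)) x := by
    intro x _
    have h1 : HasDerivAt (fun y : ℝ => -b * y ^ 2) (-b * (2 * x)) x := by
      simpa using ((hasDerivAt_pow 2 x).const_mul (-b))
    have := (h1.exp).const_mul (-(2*b)⁻¹)
    refine this.congr_deriv ?_
    field_simp
  have htend : Filter.Tendsto (fun y : ℝ => -(2*b)⁻¹ * rexp (-b * y ^ 2)) Filter.atTop (nhds 0) := by
    have : Filter.Tendsto (fun y : ℝ => rexp (-b * y ^ 2)) Filter.atTop (nhds 0) := by
      apply Real.tendsto_exp_atBot.comp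
      apply Filter.Tendsto.const_mul_atTop_of_neg (neg_neg_iff_pos.mpr hb)
      simpa using Filter.tendsto_id.atTop_mul_atTop (Filter.tendsto_id (α := ℝ)) |>.congr (fun x => by ring)
    simpa using this.const_mul (-(2*b)⁻¹)
  have := integral_Ioi_of_hasDerivAt_of_tendsto' hderiv
    ((integrable_mul_exp_neg_mul_sq hb).integrableOn) htend
  rw [this]
  norm_num

lemma gauss_pdf_eq (x : ℝ) : gaussianPDFReal 0 1 x = (Real.sqrt (2*π))⁻¹ * rexp (-(1/2) * x^2) := by
  rw [gaussianPDFReal]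
  push_cast
  rw [mul_one, sub_zero]
  ring_nf

lemma sqrt2pi_pos : 0 < Real.sqrt (2*π) := Real.sqrt_pos.mpr (by positivity)

lemma gauss_int_half : ∫ x in Ioi (0:ℝ), gaussianPDFReal 0 1 x = 1/2 := by
  simp_rw [gauss_pdf_eq]
  rw [integral_const_mul]
  have : ∫ x in Ioi (0:ℝ), rexp (-(1/2) * x^2) = Real.sqrt (π / (1/2)) / 2 :=
    integral_gaussian_Ioi (1/2)
  rw [this]
  have h2 : π / (1/2) = 2 * π := by ring
  rw [h2]
  field_simp

lemma gauss_half : (gaussianReal 0 1) (Ioi 0) = ENNReal.ofReal (1/2) := by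
  rw [gaussianReal_of_var_ne_zero 0 one_ne_zero, withDensity_apply _ measurableSet_Ioi]
  rw [gaussianPDF_def]
  rw [← ofReal_integral_eq_lintegral_ofReal ((integrable_gaussianPDFReal 0 1).integrableOn)
    (ae_of_all _ fun x => gaussianPDFReal_nonneg 0 1 x), gauss_int_half]

lemma gg_eq (x t : ℝ) :
    (gaussianPDFReal 0 1 x * x) * gaussianPDFReal 0 1 (x*t)
      = (2*π)⁻¹ * (x * rexp (-((1+t^2)/2) * x^2)) := by
  have hs : (Real.sqrt (2*π))⁻¹ * (Real.sqrt (2*π))⁻¹ = (2*π)⁻¹ := by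
    rw [← mul_inv, Real.mul_self_sqrt (by positivity)]
  rw [gauss_pdf_eq, gauss_pdf_eq]
  calc ((√(2*π))⁻¹ * rexp (-(1/2)*x^2) * x) * ((√(2*π))⁻¹ * rexp (-(1/2)*(x*t)^2))
      = ((√(2*π))⁻¹ * (√(2*π))⁻¹) * (x * (rexp (-(1/2)*x^2) * rexp (-(1/2)*(x*t)^2))) := by
        ring
    _ = (2*π)⁻¹ * (x * rexp (-((1+t^2)/2) * x^2)) := by
        rw [hs, ← Real.exp_add]; ring_nf

lemma integrable_gg (t : ℝ) :
    IntegrableOn (fun x => (gaussianPDFReal 0 1 x * x) * gaussianPDFReal 0 1 (x*t))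
      (Ioi (0:ℝ)) := by
  simp_rw [gg_eq]
  exact ((integrable_mul_exp_neg_mul_sq (by positivity : (0:ℝ) < (1+t^2)/2)).integrableOn).const_mul _

lemma inner_x (t : ℝ) :
    ∫ x in Ioi (0:ℝ), (gaussianPDFReal 0 1 x * x) * gaussianPDFReal 0 1 (x*t)
      = (2*π)⁻¹ * (1+t^2)⁻¹ := by
  simp_rw [gg_eq]
  rw [integral_const_mul, myint1 (by positivity : (0:ℝ) < (1+t^2)/2),
    show 2*((1+t^2)/2) = 1+t^2 by ring]

lemma quadrant (c : ℝ) :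
    ((gaussianReal 0 1).prod (gaussianReal 0 1)) {p : ℝ × ℝ | 0 < p.1 ∧ c * p.1 < p.2}
      = ENNReal.ofReal (1/4 - Real.arctan c / (2*π)) := by
  have hT : MeasurableSet {p : ℝ × ℝ | 0 < p.1 ∧ c * p.1 < p.2} :=
    (measurableSet_lt measurable_const measurable_fst).inter
      (measurableSet_lt (measurable_fst.const_mul c) measurable_snd)
  rw [Measure.prod_apply hT]
  have hslice : (fun x => (gaussianReal 0 1) (Prod.mk x ⁻¹' {p : ℝ × ℝ | 0 < p.1 ∧ c * p.1 < p.2}))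
      = (Ioi (0:ℝ)).indicator (fun x => (gaussianReal 0 1) (Ioi (c*x))) := by
    funext x
    by_cases hx : x ∈ Ioi (0:ℝ)
    · rw [indicator_of_mem hx]
      congr 1
      ext y; simp only [mem_preimage, mem_setOf_eq, mem_Ioi]
      exact and_iff_right hx
    · rw [indicator_of_notMem hx]
      have : Prod.mk x ⁻¹' {p : ℝ × ℝ | 0 < p.1 ∧ c * p.1 < p.2} = ∅ := by
        ext y; simp only [mem_preimage, mem_setOf_eq, mem_empty_iff_false, iff_false, not_and]
        exact fun h => absurd h hx
      simp [this]
  rw [hslice, lintegral_indicator measurableSet_Ioi]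
  have hanti' : Antitone (fun t : ℝ => (gaussianReal 0 1) (Ioi t)) :=
    fun a b hab => measure_mono (Ioi_subset_Ioi hab)
  have hanti : Measurable (fun t : ℝ => (gaussianReal 0 1) (Ioi t)) := hanti'.measurable
  have hF : Measurable (fun x : ℝ => (gaussianReal 0 1) (Ioi (c*x))) :=
    hanti.comp (measurable_const_mul c)
  rw [show (gaussianReal 0 1).restrict (Ioi 0)
      = (volume.restrict (Ioi 0)).withDensity (gaussianPDF 0 1) from by
    rw [gaussianReal_of_var_ne_zero 0 one_ne_zero, restrict_withDensity measurableSet_Ioi]]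
  rw [lintegral_withDensity_eq_lintegral_mul _ (measurable_gaussianPDF 0 1) hF]
  have hpt : ∀ x ∈ Ioi (0:ℝ),
      (gaussianPDF 0 1 * fun x => (gaussianReal 0 1) (Ioi (c*x))) x
        = ∫⁻ t in Ioi c, ENNReal.ofReal ((gaussianPDFReal 0 1 x * x) * gaussianPDFReal 0 1 (x*t))
            ∂volume := by
    intro x hx
    have hx0 : (0:ℝ) < x := hx
    have hsub : ∫ u in Ioi (c*x), gaussianPDFReal 0 1 u
        = x * ∫ t in Ioi c, gaussianPDFReal 0 1 (x*t) := by
      have h := integral_comp_mul_left_Ioi (gaussianPDFReal 0 1) c hx0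
      rw [h, smul_eq_mul, ← mul_assoc, mul_inv_cancel₀ hx0.ne', one_mul, mul_comm x c]
    have hmeasval : (gaussianReal 0 1) (Ioi (c*x))
        = ENNReal.ofReal (x * ∫ t in Ioi c, gaussianPDFReal 0 1 (x*t)) := by
      rw [gaussianReal_of_var_ne_zero 0 one_ne_zero, withDensity_apply _ measurableSet_Ioi,
        gaussianPDF_def,
        ← ofReal_integral_eq_lintegral_ofReal ((integrable_gaussianPDFReal 0 1).integrableOn)
          (ae_of_all _ fun u => gaussianPDFReal_nonneg 0 1 u), hsub]
    have hint : IntegrableOn (fun t => (gaussianPDFReal 0 1 x * x) * gaussianPDFReal 0 1 (x*t))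
        (Ioi c) := by
      exact (((integrable_gaussianPDFReal 0 1).comp_mul_left' hx0.ne').integrableOn).const_mul _
    have hswap : gaussianPDFReal 0 1 x * (x * ∫ t in Ioi c, gaussianPDFReal 0 1 (x*t))
        = ∫ t in Ioi c, (gaussianPDFReal 0 1 x * x) * gaussianPDFReal 0 1 (x*t) := by
      rw [integral_const_mul]; ring
    simp only [Pi.mul_apply]
    rw [hmeasval, gaussianPDF]
    rw [← ENNReal.ofReal_mul (gaussianPDFReal_nonneg 0 1 x), hswap,
      ofReal_integral_eq_lintegral_ofReal hint
        (ae_of_all _ fun t => mul_nonneg (mul_nonneg (gaussianPDFReal_nonneg 0 1 x) hx0.le)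
          (gaussianPDFReal_nonneg 0 1 (x*t)))]
  rw [setLIntegral_congr_fun measurableSet_Ioi hpt]
  have hum : Measurable (Function.uncurry fun x t : ℝ =>
      ENNReal.ofReal ((gaussianPDFReal 0 1 x * x) * gaussianPDFReal 0 1 (x*t))) := by
    apply Measurable.ennreal_ofReal
    exact (((measurable_gaussianPDFReal 0 1).comp measurable_fst).mul measurable_fst).mul
      ((measurable_gaussianPDFReal 0 1).comp (measurable_fst.mul measurable_snd))
  rw [lintegral_lintegral_swap hum.aemeasurable]
  have hinner : ∀ t : ℝ,
      ∫⁻ x in Ioi (0:ℝ), ENNReal.ofReal ((gaussianPDFReal 0 1 x * x) * gaussianPDFReal 0 1 (x*t))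
        ∂volume = ENNReal.ofReal ((2*π)⁻¹ * (1+t^2)⁻¹) := by
    intro t
    rw [← ofReal_integral_eq_lintegral_ofReal (integrable_gg t)
      (ae_restrict_of_forall_mem measurableSet_Ioi fun x hx =>
        mul_nonneg (mul_nonneg (gaussianPDFReal_nonneg 0 1 x) (le_of_lt hx))
          (gaussianPDFReal_nonneg 0 1 (x*t))), inner_x]
  simp_rw [hinner]
  rw [← ofReal_integral_eq_lintegral_ofReal
    ((integrable_inv_one_add_sq.integrableOn).const_mul _)
    (ae_of_all _ fun t => by positivity)]
  rw [integral_const_mul, integral_Ioi_inv_one_add_sq]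
  congr 1
  field_simp
  ring

lemma gauss_map_neg : (gaussianReal 0 1).map (fun x : ℝ => -x) = gaussianReal 0 1 := by
  have h := gaussianReal_map_const_mul (μ := 0) (v := 1) (-1)
  have h1 : ((⟨(-1:ℝ)^2, sq_nonneg _⟩ : NNReal) * 1) = 1 := by
    ext; norm_num
  rw [show (NNReal.mk ((-1:ℝ)^2) (sq_nonneg _) * 1) = 1 from h1] at h
  simpa [neg_one_mul] using h

lemma nu_fst_zero : ((gaussianReal 0 1).prod (gaussianReal 0 1)) {p : ℝ × ℝ | p.1 = 0} = 0 := by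
  have : {p : ℝ × ℝ | p.1 = 0} = ({0} : Set ℝ) ×ˢ (univ : Set ℝ) := by
    ext p; simp only [mem_setOf_eq, Set.mem_prod, Set.mem_singleton_iff, Set.mem_univ, and_true]
  rw [this, Measure.prod_prod]
  have h0 : (gaussianReal 0 1) ({0} : Set ℝ) = 0 :=
    gaussianReal_absolutelyContinuous 0 one_ne_zero (volume_singleton)
  simp [h0]

lemma quadrant' (c : ℝ) :
    ((gaussianReal 0 1).prod (gaussianReal 0 1)) {p : ℝ × ℝ | p.1 ≤ 0 ∧ c * p.1 < p.2}
      = ENNReal.ofReal (1/4 - Real.arctan (-c) / (2*π)) := by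
  set ν := (gaussianReal 0 1).prod (gaussianReal 0 1) with hν
  have hn : Measurable (Prod.map (fun x : ℝ => -x) (id : ℝ → ℝ)) :=
    Measurable.prodMap measurable_neg measurable_id
  have hinv : ν.map (Prod.map (fun x : ℝ => -x) (id : ℝ → ℝ)) = ν := by
    rw [hν, ← Measure.map_prod_map _ _ measurable_neg measurable_id, gauss_map_neg,
      Measure.map_id]
  have hS : MeasurableSet {p : ℝ × ℝ | p.1 ≤ 0 ∧ c * p.1 < p.2} :=
    (measurableSet_le measurable_fst measurable_const).inter
      (measurableSet_lt (measurable_fst.const_mul c) measurable_snd)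
  have hpre : Prod.map (fun x : ℝ => -x) (id : ℝ → ℝ) ⁻¹' {p : ℝ × ℝ | p.1 ≤ 0 ∧ c * p.1 < p.2}
      = {p : ℝ × ℝ | 0 ≤ p.1 ∧ (-c) * p.1 < p.2} := by
    ext p
    simp only [mem_preimage, Prod.map, id_eq, mem_setOf_eq, mul_neg, neg_mul]
    constructor
    · rintro ⟨h1, h2⟩; constructor <;> linarith
    · rintro ⟨h1, h2⟩; constructor <;> linarith
  have key : ν {p : ℝ × ℝ | p.1 ≤ 0 ∧ c * p.1 < p.2}
      = ν {p : ℝ × ℝ | 0 ≤ p.1 ∧ (-c) * p.1 < p.2} := by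
    conv_lhs => rw [← hinv]
    rw [Measure.map_apply hn hS, hpre]
  rw [key]
  have hot : ν {p : ℝ × ℝ | 0 ≤ p.1 ∧ (-c) * p.1 < p.2}
      = ν {p : ℝ × ℝ | 0 < p.1 ∧ (-c) * p.1 < p.2} := by
    apply le_antisymm
    · calc ν {p : ℝ × ℝ | 0 ≤ p.1 ∧ (-c) * p.1 < p.2}
          ≤ ν ({p : ℝ × ℝ | 0 < p.1 ∧ (-c) * p.1 < p.2} ∪ {p : ℝ × ℝ | p.1 = 0}) := by
            apply measure_mono
            rintro p ⟨h1, h2⟩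
            rcases lt_or_eq_of_le h1 with h | h
            · exact Or.inl ⟨h, h2⟩
            · exact Or.inr h.symm
        _ ≤ ν {p : ℝ × ℝ | 0 < p.1 ∧ (-c) * p.1 < p.2} + ν {p : ℝ × ℝ | p.1 = 0} :=
            measure_union_le _ _
        _ = ν {p : ℝ × ℝ | 0 < p.1 ∧ (-c) * p.1 < p.2} := by rw [nu_fst_zero, add_zero]
    · exact measure_mono fun p ⟨h1, h2⟩ => ⟨h1.le, h2⟩
  rw [hot, quadrant]

/-- **Theorem 2.** With `h(x) = 2 cosh(𝓗x) - (2 sinh(x/2))^(2𝓗)` and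
`ρ = (2 - h(2mθ))/(4 - 2h(mθ)) - 1 ∈ (-1,1)`, the market information
`I²_m = 1 - H(1_{Y>0} | 1_{Z>0})` of a pair `(Y, Z)` having (up to a common positive scaling)
the joint law of the consecutive increments of a delampertized fBm — realized as `Z = V`,
`Y = ρ V + √(1-ρ²) U` with `U, V` independent standard Gaussians — equals
`1 + f(1/2 - (1/π) arctan(ρ/√(1-ρ²))) + f(1/2 + (1/π) arctan(ρ/√(1-ρ²)))`. -/
theorem market_information_delampertized_fbm
    {Ω : Type*} [MeasurableSpace Ω] (P : Measure Ω) [IsProbabilityMeasure P]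
    (H θ m : ℝ) (hH : H ∈ Set.Ioo (0 : ℝ) 1) (hθ : 0 < θ) (hm : 0 < m)
    (h : ℝ → ℝ)
    (hh : ∀ x : ℝ, h x = 2 * Real.cosh (H * x) - (2 * Real.sinh (x / 2)) ^ (2 * H))
    (ρ : ℝ) (hρdef : ρ = (2 - h (2 * m * θ)) / (4 - 2 * h (m * θ)) - 1)
    (hρ : ρ ∈ Set.Ioo (-1 : ℝ) 1)
    (U V : Ω → ℝ) (hUm : Measurable U) (hVm : Measurable V)
    (hU : P.map U = gaussianReal 0 1) (hV : P.map V = gaussianReal 0 1)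
    (hUV : IndepFun U V P)
    (Y Z : Ω → ℝ)
    (hY : Y = fun ω => ρ * V ω + Real.sqrt (1 - ρ ^ 2) * U ω)
    (hZ : Z = V) :
    1 - condEntropyInd P {ω | 0 < Y ω} {ω | 0 < Z ω}
      = 1 + f (1 / 2 - 1 / π * Real.arctan (ρ / Real.sqrt (1 - ρ ^ 2)))
          + f (1 / 2 + 1 / π * Real.arctan (ρ / Real.sqrt (1 - ρ ^ 2))) := by
  obtain ⟨hρ1, hρ2⟩ := hρ
  simp only [hY, hZ]
  set s : ℝ := Real.sqrt (1 - ρ ^ 2) with hsdef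
  have hs2 : (0:ℝ) < 1 - ρ ^ 2 := by nlinarith
  have hs : 0 < s := Real.sqrt_pos.mpr hs2
  set ψ : ℝ := Real.arctan (ρ / s) with hψdef
  have hψ1 : ψ < π/2 := arctan_lt_pi_div_two _
  have hψ2 : -(π/2) < ψ := neg_pi_div_two_lt_arctan _
  have hπ := pi_pos
  have hq1 : (0:ℝ) ≤ 1/4 + ψ/(2*π) := by
    rw [show (1:ℝ)/4 + ψ/(2*π) = (π/2 + ψ)/(2*π) by field_simp; ring]
    exact div_nonneg (by linarith) (by positivity)
  have hq2 : (0:ℝ) ≤ 1/4 - ψ/(2*π) := by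
    rw [show (1:ℝ)/4 - ψ/(2*π) = (π/2 - ψ)/(2*π) by field_simp; ring]
    exact div_nonneg (by linarith) (by positivity)
  have hmap : P.map (fun ω => (V ω, U ω)) = (gaussianReal 0 1).prod (gaussianReal 0 1) := by
    rw [(indepFun_iff_map_prod_eq_prod_map_map hVm.aemeasurable hUm.aemeasurable).mp hUV.symm,
      hU, hV]
  have hWm : Measurable fun ω => (V ω, U ω) := hVm.prodMk hUm
  have hYm : Measurable fun ω => ρ * V ω + s * U ω := (hVm.const_mul ρ).add (hUm.const_mul s)
  set A : Set Ω := {ω | 0 < ρ * V ω + s * U ω} with hA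
  set B : Set Ω := {ω | 0 < V ω} with hB
  have hiff : ∀ v u : ℝ, (0 < ρ * v + s * u) ↔ ((-(ρ/s)) * v < u) := by
    intro v u
    rw [show (-(ρ/s)) * v = (-(ρ*v))/s by ring, div_lt_iff₀ hs]
    constructor <;> intro hyp <;> nlinarith [mul_comm s u]
  have hTmeas : ∀ c : ℝ, MeasurableSet {p : ℝ × ℝ | 0 < p.1 ∧ c * p.1 < p.2} := fun c =>
    (measurableSet_lt measurable_const measurable_fst).inter
      (measurableSet_lt (measurable_fst.const_mul c) measurable_snd)
  have hSmeas : ∀ c : ℝ, MeasurableSet {p : ℝ × ℝ | p.1 ≤ 0 ∧ c * p.1 < p.2} := fun c =>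
    (measurableSet_le measurable_fst measurable_const).inter
      (measurableSet_lt (measurable_fst.const_mul c) measurable_snd)
  have hAmeas : MeasurableSet A := measurableSet_lt measurable_const hYm
  have hBmeas : MeasurableSet B := measurableSet_lt measurable_const hVm
  have hPB : P B = ENNReal.ofReal (1/2) := by
    have hBpre : B = V ⁻¹' (Ioi 0) := rfl
    rw [hBpre, ← Measure.map_apply hVm measurableSet_Ioi, hV, gauss_half]
  have hPBc : P Bᶜ = ENNReal.ofReal (1/2) := by
    rw [measure_compl hBmeas (measure_ne_top _ _), hPB, measure_univ,
      show (1:ENNReal) = ENNReal.ofReal 1 by simp, ← ENNReal.ofReal_sub _ (by norm_num)]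
    norm_num
  have hPAB : P (A ∩ B) = ENNReal.ofReal (1/4 + ψ/(2*π)) := by
    have hset : A ∩ B
        = (fun ω => (V ω, U ω)) ⁻¹' {p : ℝ × ℝ | 0 < p.1 ∧ (-(ρ/s)) * p.1 < p.2} := by
      ext ω
      simp only [hA, hB, mem_inter_iff, mem_setOf_eq, mem_preimage]
      rw [hiff (V ω) (U ω), and_comm]
    rw [hset, ← Measure.map_apply hWm (hTmeas _), hmap, quadrant, arctan_neg, ← hψdef]
    congr 1
    ring
  have hPABc : P (A ∩ Bᶜ) = ENNReal.ofReal (1/4 - ψ/(2*π)) := by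
    have hset : A ∩ Bᶜ
        = (fun ω => (V ω, U ω)) ⁻¹' {p : ℝ × ℝ | p.1 ≤ 0 ∧ (-(ρ/s)) * p.1 < p.2} := by
      ext ω
      simp only [hA, hB, mem_inter_iff, mem_setOf_eq, mem_preimage, mem_compl_iff, not_lt]
      rw [hiff (V ω) (U ω), and_comm]
    rw [hset, ← Measure.map_apply hWm (hSmeas _), hmap, quadrant', neg_neg, ← hψdef]
  have hPAcB : P (Aᶜ ∩ B) = ENNReal.ofReal (1/4 - ψ/(2*π)) := by
    have hset : Aᶜ ∩ B = B \ (A ∩ B) := by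
      ext ω; simp only [mem_inter_iff, mem_compl_iff, mem_diff]; tauto
    rw [hset, measure_diff inter_subset_right (hAmeas.inter hBmeas).nullMeasurableSet
      (measure_ne_top _ _), hPAB, hPB, ← ENNReal.ofReal_sub _ hq1]
    congr 1
    ring
  have hPAcBc : P (Aᶜ ∩ Bᶜ) = ENNReal.ofReal (1/4 + ψ/(2*π)) := by
    have hset : Aᶜ ∩ Bᶜ = Bᶜ \ (A ∩ Bᶜ) := by
      ext ω; simp only [mem_inter_iff, mem_compl_iff, mem_diff]; tauto
    rw [hset, measure_diff inter_subset_right (hAmeas.inter hBmeas.compl).nullMeasurableSet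
      (measure_ne_top _ _), hPABc, hPBc, ← ENNReal.ofReal_sub _ hq2]
    congr 1
    ring
  simp only [condEntropyInd, hPB, hPBc, hPAB, hPAcB, hPABc, hPAcBc]
  rw [ENNReal.toReal_ofReal (by norm_num : (0:ℝ) ≤ 1/2), ENNReal.toReal_ofReal hq1,
    ENNReal.toReal_ofReal hq2]
  have e1 : (1/4 + ψ/(2*π))/(1/2) = 1/2 + 1/π * ψ := by field_simp; ring
  have e2 : (1/4 - ψ/(2*π))/(1/2) = 1/2 - 1/π * ψ := by field_simp; ring
  rw [e1, e2]
  ring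

end AuxMarketInfo
end

section
/- For ρ ∈ (−1,1) define g(ρ) = 1 + f(1/2 − (1/π)·arctan(ρ/√(1−ρ²))) + f(1/2 + (1/π)·arctan(ρ/√(1−ρ²))), where f(x) = x·log₂(x) for x > 0 and f(0) = 0. Then g(ρ) ≥ 0 for all ρ ∈ (−1,1), and g(ρ) = 0 if and only if ρ = 0. Consequently, the market information I²_m = g(2^{2𝓗−1} − 1) of a fractional Brownian motion with Hurst exponent 𝓗 ∈ (0,1) is zero if and only if 𝓗 = 1/2. -/
open Real

noncomputable def g (ρ : ℝ) : ℝ :=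
  1 + f (1 / 2 - 1 / π * Real.arctan (ρ / Real.sqrt (1 - ρ ^ 2)))
    + f (1 / 2 + 1 / π * Real.arctan (ρ / Real.sqrt (1 - ρ ^ 2)))

lemma hb_aux (x : ℝ) (hx : 0 < x) : x - 1/2 ≤ x * Real.log (2 * x) := by
  have h1 : Real.log (1 / (2 * x)) ≤ 1 / (2 * x) - 1 :=
    Real.log_le_sub_one_of_pos (by positivity)
  rw [Real.log_div one_ne_zero (by positivity), Real.log_one] at h1
  have h2 : 1 - 1 / (2 * x) ≤ Real.log (2 * x) := by linarith
  have h3 := mul_le_mul_of_nonneg_left h2 hx.le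
  have hxx : x * (1 - 1 / (2 * x)) = x - 1/2 := by field_simp
  linarith [hxx ▸ h3]

lemma hbs_aux (x : ℝ) (hx : 0 < x) (hne : 2 * x ≠ 1) :
    x - 1/2 < x * Real.log (2 * x) := by
  have h1 : Real.log (1 / (2 * x)) < 1 / (2 * x) - 1 := by
    apply Real.log_lt_sub_one_of_pos (by positivity)
    intro h
    apply hne
    field_simp at h
    linarith
  rw [Real.log_div one_ne_zero (by positivity), Real.log_one] at h1
  have h2 : 1 - 1 / (2 * x) < Real.log (2 * x) := by linarith
  have h3 := mul_lt_mul_of_pos_left h2 hx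
  have hxx : x * (1 - 1 / (2 * x)) = x - 1/2 := by field_simp
  linarith [hxx ▸ h3]

lemma key (p q : ℝ) (hp : 0 < p) (hq : 0 < q) (hpq : p + q = 1) :
    0 ≤ Real.log 2 + q * Real.log q + p * Real.log p ∧
    (Real.log 2 + q * Real.log q + p * Real.log p = 0 ↔ p = 1 / 2) := by
  have hA : Real.log 2 + q * Real.log q + p * Real.log p
      = p * Real.log (2 * p) + q * Real.log (2 * q) := by
    rw [Real.log_mul two_ne_zero hp.ne', Real.log_mul two_ne_zero hq.ne']
    have : (p + q) * Real.log 2 = Real.log 2 := by rw [hpq, one_mul]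
    nlinarith [this]
  have h1 := hb_aux p hp
  have h2 := hb_aux q hq
  constructor
  · rw [hA]; linarith
  · constructor
    · intro h
      by_contra hne
      have hne2 : 2 * p ≠ 1 := fun hh => hne (by linarith)
      have h3 := hbs_aux p hp hne2
      rw [hA] at h
      linarith
    · intro h
      have hq2 : q = 1/2 := by linarith
      subst h; rw [hq2]
      rw [show Real.log (1/2) = - Real.log 2 by
        rw [Real.log_div one_ne_zero two_ne_zero, Real.log_one]; ring]
      ring

lemma g_eq (ρ : ℝ) :
    g ρ = (Real.log 2
      + (1/2 - 1/π * Real.arctan (ρ / Real.sqrt (1 - ρ ^ 2))) * Real.log (1/2 - 1/π * Real.arctan (ρ / Real.sqrt (1 - ρ ^ 2)))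
      + (1/2 + 1/π * Real.arctan (ρ / Real.sqrt (1 - ρ ^ 2))) * Real.log (1/2 + 1/π * Real.arctan (ρ / Real.sqrt (1 - ρ ^ 2)))) / Real.log 2 := by
  have hl2 : Real.log 2 ≠ 0 := ne_of_gt (Real.log_pos one_lt_two)
  unfold g f Real.logb
  field_simp

lemma part1 (ρ : ℝ) (hρ1 : -1 < ρ) (hρ2 : ρ < 1) : 0 ≤ g ρ ∧ (g ρ = 0 ↔ ρ = 0) := by
  have hs : 0 < Real.sqrt (1 - ρ ^ 2) := Real.sqrt_pos.2 (by nlinarith)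
  have hπ : 0 < π := pi_pos
  set t : ℝ := 1/π * Real.arctan (ρ / Real.sqrt (1 - ρ ^ 2)) with ht
  have harc := Real.arctan_mem_Ioo (ρ / Real.sqrt (1 - ρ ^ 2))
  have ht1 : -(1/2) < t := by
    rw [ht, show (-(1/2) : ℝ) = 1/π * (-(π/2)) by field_simp]
    exact (mul_lt_mul_iff_right₀ (by positivity)).2 harc.1
  have ht2 : t < 1/2 := by
    rw [ht, show (1/2 : ℝ) = 1/π * (π/2) by field_simp]
    exact (mul_lt_mul_iff_right₀ (by positivity)).2 harc.2
  have hp : 0 < 1/2 + t := by linarith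
  have hq : 0 < 1/2 - t := by linarith
  have hk := key (1/2 + t) (1/2 - t) hp hq (by ring)
  have hge : g ρ = (Real.log 2 + (1/2 - t) * Real.log (1/2 - t)
      + (1/2 + t) * Real.log (1/2 + t)) / Real.log 2 := by
    rw [g_eq]
  have hl2 : 0 < Real.log 2 := Real.log_pos one_lt_two
  constructor
  · rw [hge]; exact div_nonneg hk.1 hl2.le
  · rw [hge, div_eq_zero_iff]
    constructor
    · rintro (h | h)
      · have hteq : t = 0 := by linarith [hk.2.1 h]
        rw [ht] at hteq
        have ha : Real.arctan (ρ / Real.sqrt (1 - ρ ^ 2)) = 0 := by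
          rcases mul_eq_zero.1 hteq with h' | h'
          · exact absurd h' (by positivity)
          · exact h'
        rw [Real.arctan_eq_zero_iff, div_eq_zero_iff] at ha
        rcases ha with h' | h'
        · exact h'
        · exact absurd h' hs.ne'
      · exact absurd h hl2.ne'
    · intro h
      subst h
      left
      apply hk.2.2
      have : t = 0 := by simp [ht]
      linarith

/-- `g ρ ≥ 0` on `(-1,1)` with equality iff `ρ = 0`; consequently the market information
`I²_m = g(2^(2𝓗-1) - 1)` of an fBm with Hurst exponent `𝓗 ∈ (0,1)` vanishes iff `𝓗 = 1/2`. -/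
theorem market_information_nonneg_zero_iff :
    (∀ ρ ∈ Set.Ioo (-1 : ℝ) 1, 0 ≤ g ρ ∧ (g ρ = 0 ↔ ρ = 0)) ∧
    (∀ H ∈ Set.Ioo (0 : ℝ) 1,
      (g ((2 : ℝ) ^ (2 * H - 1) - 1) = 0 ↔ H = 1 / 2)) := by
  constructor
  · intro ρ hρ; exact part1 ρ hρ.1 hρ.2
  · intro H hH
    have h0 : (0:ℝ) < (2:ℝ) ^ (2 * H - 1) := Real.rpow_pos_of_pos two_pos _
    have hlt : (2:ℝ) ^ (2 * H - 1) < 2 := by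
      have h : (2:ℝ) ^ (2 * H - 1) < (2:ℝ) ^ (1:ℝ) :=
        (Real.rpow_lt_rpow_left_iff one_lt_two).2 (by linarith [hH.2])
      simpa using h
    have hρ1 : -1 < (2:ℝ) ^ (2 * H - 1) - 1 := by linarith
    have hρ2 : (2:ℝ) ^ (2 * H - 1) - 1 < 1 := by linarith
    rw [(part1 _ hρ1 hρ2).2]
    constructor
    · intro h
      have h1 : (2:ℝ) ^ (2 * H - 1) = (2:ℝ) ^ (0:ℝ) := by
        rw [Real.rpow_zero]; linarith
      have hle : 2 * H - 1 ≤ 0 :=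
        (Real.rpow_le_rpow_left_iff one_lt_two).1 h1.le
      have hge : (0:ℝ) ≤ 2 * H - 1 :=
        (Real.rpow_le_rpow_left_iff one_lt_two).1 h1.ge
      linarith
    · intro h
      subst h
      norm_num
end

section
/- For ρ ∈ (−1,1) define g(ρ) = 1 + f(1/2 − (1/π)·arctan(ρ/√(1−ρ²))) + f(1/2 + (1/π)·arctan(ρ/√(1−ρ²))), where f(x) = x·log₂(x) for x > 0 and f(0) = 0. Then g is an even function of ρ and is strictly increasing on [0,1). Consequently, the map 𝓗 ↦ g(2^{2𝓗−1} − 1), giving the market information of a fractional Brownian motion with Hurst exponent 𝓗, is strictly decreasing on (0,1/2] and strictly increasing on [1/2,1): the market information increases as 𝓗 moves away from 1/2. -/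
open Real

noncomputable def H0 (u : ℝ) : ℝ :=
  (1/2 - u) * Real.log (1/2 - u) + (1/2 + u) * Real.log (1/2 + u)

lemma hasDerivAt_xlogx {x : ℝ} (hx : x ≠ 0) :
    HasDerivAt (fun t : ℝ => t * Real.log t) (Real.log x + 1) x := by
  have := (hasDerivAt_id x).mul (Real.hasDerivAt_log hx)
  simpa [mul_inv_cancel₀ hx, add_comm, Pi.mul_def] using this

lemma hasDerivAt_H0 {u : ℝ} (h1 : 0 < 1/2 - u) (h2 : 0 < 1/2 + u) :
    HasDerivAt H0 (Real.log (1/2 + u) - Real.log (1/2 - u)) u := by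
  have a1 : HasDerivAt (fun u : ℝ => 1/2 - u) (-1) u := by
    simpa [Pi.sub_def] using (hasDerivAt_const u (1/2:ℝ)).sub (hasDerivAt_id u)
  have a2 : HasDerivAt (fun u : ℝ => 1/2 + u) 1 u := by
    simpa [Pi.add_def] using (hasDerivAt_const u (1/2:ℝ)).add (hasDerivAt_id u)
  have b1 := (hasDerivAt_xlogx h1.ne').comp u a1
  have b2 := (hasDerivAt_xlogx h2.ne').comp u a2
  have hsum := b1.add b2
  have hfun : HasDerivAt H0
      ((Real.log (1/2 - u) + 1) * (-1) + (Real.log (1/2 + u) + 1) * 1) u := hsum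
  have hval : Real.log (1/2 + u) - Real.log (1/2 - u)
      = (Real.log (1/2 - u) + 1) * (-1) + (Real.log (1/2 + u) + 1) * 1 := by ring
  rw [hval]; exact hfun

lemma H0_mono : StrictMonoOn H0 (Set.Ico (0:ℝ) (1/2)) := by
  apply strictMonoOn_of_deriv_pos (convex_Ico _ _)
  · intro x hx
    simp only [Set.mem_Ico] at hx
    have h1 : 0 < 1/2 - x := by linarith [hx.2]
    have h2 : 0 < 1/2 + x := by linarith [hx.1]
    exact (hasDerivAt_H0 h1 h2).continuousAt.continuousWithinAt
  · intro x hx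
    rw [interior_Ico] at hx
    have h1 : 0 < 1/2 - x := by linarith [hx.2]
    have h2 : 0 < 1/2 + x := by linarith [hx.1]
    rw [(hasDerivAt_H0 h1 h2).deriv]
    have : Real.log (1/2 - x) < Real.log (1/2 + x) :=
      Real.log_lt_log h1 (by linarith [hx.1])
    linarith

noncomputable def h (u : ℝ) : ℝ := 1 + f (1/2 - u) + f (1/2 + u)

lemma h_eq (u : ℝ) : h u = 1 + H0 u / Real.log 2 := by
  simp [h, H0, f, Real.logb]; ring

lemma h_mono : StrictMonoOn h (Set.Ico (0:ℝ) (1/2)) := by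
  intro x hx y hy hxy
  have hH := H0_mono hx hy hxy
  rw [h_eq, h_eq]
  have h2 : (0:ℝ) < Real.log 2 := Real.log_pos (by norm_num)
  gcongr

lemma g_eq_h {ρ : ℝ} (hρ : ρ ∈ Set.Ioo (-1:ℝ) 1) :
    g ρ = h (Real.arcsin ρ / π) := by
  have harc : Real.arcsin ρ = Real.arctan (ρ / Real.sqrt (1 - ρ ^ 2)) :=
    Real.arcsin_eq_arctan (by simpa using hρ)
  simp only [g, h, ← harc]
  ring_nf

lemma g_even (ρ : ℝ) : g (-ρ) = g ρ := by
  simp only [g, neg_sq, neg_div, Real.arctan_neg, mul_neg, sub_neg_eq_add,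
    ← sub_eq_add_neg]
  ring

lemma arcsin_div_pi_mem {ρ : ℝ} (hρ : ρ ∈ Set.Ico (0:ℝ) 1) :
    Real.arcsin ρ / π ∈ Set.Ico (0:ℝ) (1/2) := by
  constructor
  · exact div_nonneg (Real.arcsin_nonneg.2 hρ.1) Real.pi_pos.le
  · rw [div_lt_iff₀ Real.pi_pos]
    have := Real.arcsin_lt_pi_div_two.2 hρ.2
    linarith

lemma g_mono : StrictMonoOn g (Set.Ico (0:ℝ) 1) := by
  intro x hx y hy hxy
  rw [g_eq_h ⟨by linarith [hx.1], hx.2⟩, g_eq_h ⟨by linarith [hy.1], hy.2⟩]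
  apply h_mono (arcsin_div_pi_mem hx) (arcsin_div_pi_mem hy)
  have harc : Real.arcsin x < Real.arcsin y :=
    Real.strictMonoOn_arcsin ⟨by linarith [hx.1], hx.2.le⟩ ⟨by linarith [hy.1], hy.2.le⟩ hxy
  gcongr

/- ρ(H) = 2^(2H-1) - 1 facts -/
lemma rho_lt_rho {a b : ℝ} (hab : a < b) :
    (2:ℝ) ^ (2*a - 1) - 1 < (2:ℝ) ^ (2*b - 1) - 1 := by
  have : (2:ℝ) ^ (2*a - 1) < (2:ℝ) ^ (2*b - 1) :=
    (Real.rpow_lt_rpow_left_iff (by norm_num : (1:ℝ) < 2)).mpr (by linarith)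
  linarith

/-- `g` is even on `(-1,1)` and strictly increasing on `[0,1)`; consequently the market
information `𝓗 ↦ g(2^(2𝓗-1) - 1)` of an fBm is strictly decreasing on `(0, 1/2]` and
strictly increasing on `[1/2, 1)`: it increases as `𝓗` moves away from `1/2`. -/
theorem market_information_even_and_monotone :
    (∀ ρ ∈ Set.Ioo (-1 : ℝ) 1, g (-ρ) = g ρ) ∧
    StrictMonoOn g (Set.Ico (0 : ℝ) 1) ∧
    StrictAntiOn (fun H : ℝ => g ((2 : ℝ) ^ (2 * H - 1) - 1)) (Set.Ioc (0 : ℝ) (1 / 2)) ∧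
    StrictMonoOn (fun H : ℝ => g ((2 : ℝ) ^ (2 * H - 1) - 1)) (Set.Ico (1 / 2 : ℝ) 1) := by
  refine ⟨fun ρ _ => g_even ρ, g_mono, ?_, ?_⟩
  · intro x hx y hy hxy
    simp only
    have hρmem : ∀ z ∈ Set.Ioc (0:ℝ) (1/2),
        -((2:ℝ) ^ (2*z - 1) - 1) ∈ Set.Ico (0:ℝ) 1 := by
      intro z hz
      have h1 : (2:ℝ) ^ (2*z - 1) ≤ (2:ℝ) ^ (0:ℝ) :=
        Real.rpow_le_rpow_of_exponent_le (by norm_num) (by linarith [hz.2])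
      have h2 : (2:ℝ) ^ ((-1:ℝ)) < (2:ℝ) ^ (2*z - 1) :=
        (Real.rpow_lt_rpow_left_iff (by norm_num : (1:ℝ) < 2)).mpr (by linarith [hz.1])
      rw [Real.rpow_zero] at h1
      rw [Real.rpow_neg_one] at h2
      constructor <;> [linarith; linarith]
    rw [← g_even ((2:ℝ) ^ (2*x - 1) - 1), ← g_even ((2:ℝ) ^ (2*y - 1) - 1)]
    exact g_mono (hρmem y hy) (hρmem x hx) (by linarith [rho_lt_rho hxy])
  · intro x hx y hy hxy
    simp only
    have hρmem : ∀ z ∈ Set.Ico (1/2:ℝ) 1,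
        (2:ℝ) ^ (2*z - 1) - 1 ∈ Set.Ico (0:ℝ) 1 := by
      intro z hz
      have h1 : (2:ℝ) ^ ((0:ℝ)) ≤ (2:ℝ) ^ (2*z - 1) :=
        Real.rpow_le_rpow_of_exponent_le (by norm_num) (by linarith [hz.1])
      have h2 : (2:ℝ) ^ (2*z - 1) < (2:ℝ) ^ ((1:ℝ)) :=
        (Real.rpow_lt_rpow_left_iff (by norm_num : (1:ℝ) < 2)).mpr (by linarith [hz.2])
      rw [Real.rpow_zero] at h1
      rw [Real.rpow_one] at h2
      constructor <;> [linarith; linarith]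
    exact g_mono (hρmem x hx) (hρmem y hy) (rho_lt_rho hxy)
end

section
/- For ρ ∈ (−1,1) define g(ρ) = 1 + f(1/2 − (1/π)·arctan(ρ/√(1−ρ²))) + f(1/2 + (1/π)·arctan(ρ/√(1−ρ²))), where f(x) = x·log₂(x) for x > 0 and f(0) = 0. Then for every 𝓗 ∈ (1/2,1), g(2^{2𝓗−1} − 1) > g(2^{2(1−𝓗)−1} − 1): the market information of a fractional Brownian motion with Hurst exponent 𝓗 > 1/2 strictly exceeds that of a fractional Brownian motion with Hurst exponent 1 − 𝓗. Equivalently, for 𝓗 ∈ (1/2,1), the correlations ρ(𝓗) = 2^{2𝓗−1} − 1 and ρ(1−𝓗) = 2^{1−2𝓗} − 1 satisfy ρ(𝓗) > |ρ(1−𝓗)| = 1 − 2^{1−2𝓗}. -/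
open Real

noncomputable def φ (s : ℝ) : ℝ := f (1 / 2 - s) + f (1 / 2 + s)

lemma f_hasDerivAt {x : ℝ} (hx : 0 < x) :
    HasDerivAt f (Real.logb 2 x + 1 / Real.log 2) x := by
  have h1 : HasDerivAt Real.log x⁻¹ x := Real.hasDerivAt_log hx.ne'
  have h2 : HasDerivAt (fun y => y * Real.log y) (1 * Real.log x + x * x⁻¹) x :=
    (hasDerivAt_id x).mul h1
  have h3 : HasDerivAt (fun y => y * Real.log y / Real.log 2)
      ((1 * Real.log x + x * x⁻¹) / Real.log 2) x := h2.div_const _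
  have : (1 * Real.log x + x * x⁻¹) / Real.log 2 = Real.logb 2 x + 1 / Real.log 2 := by
    rw [mul_inv_cancel₀ hx.ne', Real.logb]
    ring
  rw [this] at h3
  convert h3 using 2 with y
  simp [f, Real.logb]
  ring

lemma φ_hasDerivAt {s : ℝ} (h1 : 0 < 1 / 2 - s) (h2 : 0 < 1 / 2 + s) :
    HasDerivAt φ (Real.logb 2 (1 / 2 + s) - Real.logb 2 (1 / 2 - s)) s := by
  have hA : HasDerivAt (fun t : ℝ => (1:ℝ) / 2 - t) (-1) s := by
    simpa using (hasDerivAt_id s).const_sub (1/2 : ℝ)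
  have hB : HasDerivAt (fun t : ℝ => (1:ℝ) / 2 + t) 1 s := by
    simpa using (hasDerivAt_id s).const_add (1/2 : ℝ)
  have hfA := (f_hasDerivAt h1).comp s hA
  have hfB := (f_hasDerivAt h2).comp s hB
  have := hfA.add hfB
  refine this.congr_deriv ?_
  ring

lemma φ_strictMonoOn : StrictMonoOn φ (Set.Ico 0 (1/2 : ℝ)) := by
  apply strictMonoOn_of_deriv_pos (convex_Ico _ _)
  · intro s hs
    exact (φ_hasDerivAt (by simp at hs; linarith [hs.2]) (by simp at hs; linarith [hs.1])).continuousAt.continuousWithinAt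
  · intro s hs
    rw [interior_Ico] at hs
    obtain ⟨hs0, hs12⟩ := hs
    have h1 : 0 < 1/2 - s := by linarith
    have h2 : 0 < 1/2 + s := by linarith
    rw [(φ_hasDerivAt h1 h2).deriv]
    have : Real.logb 2 (1/2 - s) < Real.logb 2 (1/2 + s) :=
      Real.logb_lt_logb (by norm_num) h1 (by linarith)
    linarith

lemma g_eq_s16 (ρ : ℝ) (hρ : ρ ∈ Set.Ioo (-1 : ℝ) 1) :
    g ρ = 1 + φ (Real.arcsin ρ / π) := by
  have h := Real.arcsin_eq_arctan hρ
  have hπ : (π : ℝ) ≠ 0 := Real.pi_ne_zero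
  simp only [g, φ, ← h]
  rw [one_div π, inv_mul_eq_div]
  ring

/-- For `𝓗 ∈ (1/2, 1)`, the market information of an fBm with Hurst exponent `𝓗` strictly
exceeds that of an fBm with Hurst exponent `1 - 𝓗`; equivalently the correlations
`ρ(𝓗) = 2^(2𝓗-1) - 1` and `ρ(1-𝓗) = 2^(1-2𝓗) - 1` satisfy
`ρ(𝓗) > |ρ(1-𝓗)| = 1 - 2^(1-2𝓗)`. -/
theorem market_information_asymmetry
    (H : ℝ) (hH : H ∈ Set.Ioo (1 / 2 : ℝ) 1) :
    g ((2 : ℝ) ^ (2 * H - 1) - 1) > g ((2 : ℝ) ^ (2 * (1 - H) - 1) - 1) ∧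
    (2 : ℝ) ^ (2 * H - 1) - 1 > |(2 : ℝ) ^ (2 * (1 - H) - 1) - 1| ∧
    |(2 : ℝ) ^ (2 * (1 - H) - 1) - 1| = 1 - (2 : ℝ) ^ (1 - 2 * H) := by
  obtain ⟨h1, h2⟩ := hH
  have he : 2 * (1 - H) - 1 = 1 - 2 * H := by ring
  rw [he]
  set t : ℝ := 2 * H - 1 with ht
  have ht0 : 0 < t := by simp [ht]; linarith
  have ht1 : t < 1 := by simp [ht]; linarith
  have hneg : 1 - 2 * H = -t := by ring
  rw [hneg]
  -- a = 2^t ∈ (1,2), b = 2^(-t) ∈ (1/2,1)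
  set a : ℝ := (2:ℝ) ^ t with ha
  set b : ℝ := (2:ℝ) ^ (-t) with hb
  have ha1 : 1 < a := Real.one_lt_rpow_iff_of_pos (by norm_num) |>.2 (Or.inl ⟨by norm_num, ht0⟩)
  have ha2 : a < 2 := by
    calc a < (2:ℝ) ^ (1:ℝ) := Real.rpow_lt_rpow_of_exponent_lt (by norm_num) ht1
    _ = 2 := Real.rpow_one 2
  have hb1 : b < 1 := Real.rpow_lt_one_of_one_lt_of_neg (by norm_num) (by linarith)
  have hab : a * b = 1 := by
    rw [ha, hb, ← Real.rpow_add (by norm_num)]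
    simp
  have hb0 : 0 < b := Real.rpow_pos_of_pos (by norm_num) _
  have hbhalf : 1/2 < b := by nlinarith
  -- key inequality: a - 1 > 1 - b
  have hkey : a - 1 > 1 - b := by nlinarith [sq_nonneg (a - 1)]
  have habs : |b - 1| = 1 - b := by rw [abs_of_nonpos (by linarith)]; ring
  refine ⟨?_, by rw [habs]; linarith, by rw [habs]⟩
  -- now the g inequality
  have hρ1 : a - 1 ∈ Set.Ioo (-1 : ℝ) 1 := ⟨by linarith, by linarith⟩
  have hρ2 : b - 1 ∈ Set.Ioo (-1 : ℝ) 1 := ⟨by linarith, by linarith⟩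
  rw [g_eq_s16 _ hρ1, g_eq_s16 _ hρ2]
  have hπ : (0:ℝ) < π := Real.pi_pos
  -- arcsin(b-1) = -arcsin(1-b)
  have hsin2 : Real.arcsin (b - 1) = -Real.arcsin (1 - b) := by
    rw [show b - 1 = -(1 - b) by ring, Real.arcsin_neg]
  -- φ is even
  have hφeven : ∀ s : ℝ, φ (-s) = φ s := by
    intro s; simp only [φ]; rw [show 1/2 - -s = 1/2 + s by ring, show 1/2 + -s = 1/2 - s by ring]
    ring
  rw [hsin2, neg_div, hφeven]
  have hs1mem : Real.arcsin (a - 1) / π ∈ Set.Ico 0 (1/2 : ℝ) := by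
    constructor
    · exact div_nonneg (Real.arcsin_nonneg.2 (by linarith)) hπ.le
    · rw [div_lt_iff₀ hπ]
      have := Real.arcsin_lt_pi_div_two.2 (show a - 1 < 1 by linarith)
      linarith
  have hs2mem : Real.arcsin (1 - b) / π ∈ Set.Ico 0 (1/2 : ℝ) := by
    constructor
    · exact div_nonneg (Real.arcsin_nonneg.2 (by linarith)) hπ.le
    · rw [div_lt_iff₀ hπ]
      have := Real.arcsin_lt_pi_div_two.2 (show 1 - b < 1 by linarith)
      linarith
  have harcs : Real.arcsin (1 - b) < Real.arcsin (a - 1) :=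
    Real.strictMonoOn_arcsin ⟨by linarith, by linarith⟩ ⟨by linarith, by linarith⟩ hkey
  have hlt : Real.arcsin (1 - b) / π < Real.arcsin (a - 1) / π :=
    (div_lt_div_iff_of_pos_right hπ).2 harcs
  have := φ_strictMonoOn hs2mem hs1mem hlt
  linarith
end

section
/- Let 𝓗 ∈ (0,1) and m > 0, and set h(x) = 2·cosh(𝓗x) − (2·sinh(x/2))^{2𝓗} for x ≥ 0. Then the correlation of consecutive increments of the delampertized fractional Brownian motion, ρ(θ) = (2 − h(2mθ))/(4 − 2·h(mθ)) − 1, converges as θ → 0⁺ to 2^{2𝓗−1} − 1, the correlation of consecutive increments of the fractional Brownian motion itself. -/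
open Real Filter

lemma aux_sinh_div : Tendsto (fun x : ℝ => Real.sinh x / x) (nhdsWithin 0 {(0:ℝ)}ᶜ) (nhds 1) := by
  have := Real.hasDerivAt_sinh (0:ℝ)
  rw [hasDerivAt_iff_tendsto_slope] at this
  refine this.congr (fun x => ?_) |>.mono_right (by rw [Real.cosh_zero])
  simp [slope_def_field]

lemma aux_map_ne {c : ℝ} (hc : c ≠ 0) :
    Tendsto (fun x : ℝ => c * x) (nhdsWithin 0 (Set.Ioi 0)) (nhdsWithin 0 {(0:ℝ)}ᶜ) := by
  rw [tendsto_nhdsWithin_iff]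
  constructor
  · have : Tendsto (fun x : ℝ => c * x) (nhds 0) (nhds 0) := by
      simpa using (continuous_mul_left c).tendsto (0:ℝ)
    exact this.mono_left nhdsWithin_le_nhds
  · filter_upwards [self_mem_nhdsWithin] with x hx
    exact mul_ne_zero hc (ne_of_gt hx)

lemma aux_sinh_scaled {c : ℝ} (hc : c ≠ 0) :
    Tendsto (fun x : ℝ => Real.sinh (c * x) / (c * x)) (nhdsWithin 0 (Set.Ioi 0)) (nhds 1) :=
  aux_sinh_div.comp (aux_map_ne hc)

lemma aux_A (H : ℝ) :
    Tendsto (fun x : ℝ => (2 * Real.sinh (x / 2)) ^ (2 * H) / x ^ (2 * H))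
      (nhdsWithin 0 (Set.Ioi 0)) (nhds 1) := by
  have hbase : Tendsto (fun x : ℝ => 2 * Real.sinh (x / 2) / x) (nhdsWithin 0 (Set.Ioi 0)) (nhds 1) := by
    refine (aux_sinh_scaled (c := 1/2) (by norm_num)).congr' ?_
    filter_upwards [self_mem_nhdsWithin] with x hx
    have hx0 : x ≠ 0 := ne_of_gt hx
    rw [one_div, inv_mul_eq_div]
    field_simp
  have hcont : Tendsto (fun y : ℝ => y ^ (2 * H)) (nhds 1) (nhds 1) := by
    have := (Real.continuousAt_rpow_const 1 (2 * H) (Or.inl one_ne_zero)).tendsto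
    simpa using this
  refine (hcont.comp hbase).congr' ?_
  filter_upwards [self_mem_nhdsWithin] with x hx
  have hx' : (0:ℝ) < x := hx
  have hs : (0:ℝ) ≤ 2 * Real.sinh (x / 2) := by
    have := Real.sinh_pos_iff.mpr (by linarith : (0:ℝ) < x / 2)
    linarith
  simp only [Function.comp]
  rw [Real.div_rpow hs (le_of_lt hx')]

lemma aux_B {H : ℝ} (hH0 : 0 < H) (hH1 : H < 1) :
    Tendsto (fun x : ℝ => (Real.cosh (H * x) - 1) / x ^ (2 * H))
      (nhdsWithin 0 (Set.Ioi 0)) (nhds 0) := by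
  -- cosh(Hx) - 1 = 2 sinh(Hx/2)^2
  have key : ∀ x : ℝ, Real.cosh (H * x) - 1 = 2 * Real.sinh (H / 2 * x) ^ 2 := by
    intro x
    have h1 : H * x = 2 * (H / 2 * x) := by ring
    rw [h1, Real.cosh_two_mul, Real.cosh_sq]
    ring
  have hpow : Tendsto (fun x : ℝ => x ^ (2 - 2 * H)) (nhdsWithin 0 (Set.Ioi 0)) (nhds 0) := by
    have := (Real.continuousAt_rpow_const 0 (2 - 2 * H) (Or.inr (by linarith))).tendsto
    rw [Real.zero_rpow (by linarith : 2 - 2 * H ≠ 0)] at this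
    exact this.mono_left nhdsWithin_le_nhds
  have hsq : Tendsto (fun x : ℝ => 2 * (Real.sinh (H / 2 * x) / x) ^ 2)
      (nhdsWithin 0 (Set.Ioi 0)) (nhds (2 * (H / 2) ^ 2)) := by
    have h1 : Tendsto (fun x : ℝ => Real.sinh (H / 2 * x) / x) (nhdsWithin 0 (Set.Ioi 0)) (nhds (H / 2)) := by
      have h2 := (aux_sinh_scaled (c := H / 2) (by positivity)).const_mul (H / 2)
      rw [mul_one] at h2
      refine h2.congr' ?_
      filter_upwards [self_mem_nhdsWithin] with x hx
      have hx0 : x ≠ 0 := ne_of_gt hx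
      field_simp
    exact (h1.pow 2).const_mul 2
  have := hpow.mul hsq
  rw [zero_mul] at this
  refine this.congr' ?_
  filter_upwards [self_mem_nhdsWithin] with x hx
  have hx0 : (0:ℝ) < x := hx
  rw [key x]
  rw [Real.rpow_sub hx0, div_pow, mul_div_assoc]
  have hx2 : x ^ (2:ℝ) = x ^ 2 := by
    rw [show ((2:ℝ)) = ((2:ℕ):ℝ) by norm_num, Real.rpow_natCast]
  rw [hx2]
  field_simp

lemma aux_F {H : ℝ} (hH0 : 0 < H) (hH1 : H < 1) :
    Tendsto (fun x : ℝ =>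
        ((2 * Real.sinh (x / 2)) ^ (2 * H) - 2 * (Real.cosh (H * x) - 1)) / x ^ (2 * H))
      (nhdsWithin 0 (Set.Ioi 0)) (nhds 1) := by
  have := (aux_A H).sub ((aux_B hH0 hH1).const_mul 2)
  rw [mul_zero, sub_zero] at this
  refine this.congr fun x => ?_
  conv_rhs => rw [sub_div, mul_div_assoc]


/-- With `h(x) = 2 cosh(𝓗x) - (2 sinh(x/2))^(2𝓗)`, the correlation of consecutive increments
of the delampertized fBm, `ρ(θ) = (2 - h(2mθ))/(4 - 2h(mθ)) - 1`, tends as `θ → 0⁺` to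
`2^(2𝓗-1) - 1`, the correlation of consecutive increments of the fBm itself. -/
theorem delampertized_correlation_tendsto_fbm_correlation
    (H m : ℝ) (hH : H ∈ Set.Ioo (0 : ℝ) 1) (hm : 0 < m)
    (h : ℝ → ℝ)
    (hh : ∀ x : ℝ, h x = 2 * Real.cosh (H * x) - (2 * Real.sinh (x / 2)) ^ (2 * H)) :
    Tendsto (fun θ : ℝ => (2 - h (2 * m * θ)) / (4 - 2 * h (m * θ)) - 1)
      (nhdsWithin 0 (Set.Ioi 0)) (nhds ((2 : ℝ) ^ (2 * H - 1) - 1)) := by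
  obtain ⟨hH0, hH1⟩ := hH
  set F : ℝ → ℝ := fun x =>
    ((2 * Real.sinh (x / 2)) ^ (2 * H) - 2 * (Real.cosh (H * x) - 1)) / x ^ (2 * H) with hF
  -- maps θ ↦ cθ into 𝓝[>]0
  have hmap : ∀ c : ℝ, 0 < c → Tendsto (fun θ : ℝ => c * θ)
      (nhdsWithin 0 (Set.Ioi 0)) (nhdsWithin 0 (Set.Ioi 0)) := by
    intro c hc
    rw [tendsto_nhdsWithin_iff]
    constructor
    · have : Tendsto (fun θ : ℝ => c * θ) (nhds 0) (nhds 0) := by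
        simpa using (continuous_mul_left c).tendsto (0:ℝ)
      exact this.mono_left nhdsWithin_le_nhds
    · filter_upwards [self_mem_nhdsWithin] with θ hθ
      exact mul_pos hc hθ
  have hF1 : Tendsto F (nhdsWithin 0 (Set.Ioi 0)) (nhds 1) := aux_F hH0 hH1
  have h2m : Tendsto (fun θ : ℝ => F (2 * m * θ)) (nhdsWithin 0 (Set.Ioi 0)) (nhds 1) :=
    hF1.comp (hmap (2 * m) (by linarith))
  have h1m : Tendsto (fun θ : ℝ => F (m * θ)) (nhdsWithin 0 (Set.Ioi 0)) (nhds 1) :=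
    hF1.comp (hmap m hm)
  have hlim : Tendsto (fun θ : ℝ => (2:ℝ) ^ (2 * H - 1) * (F (2 * m * θ) / F (m * θ)) - 1)
      (nhdsWithin 0 (Set.Ioi 0)) (nhds ((2:ℝ) ^ (2 * H - 1) - 1)) := by
    have := ((h2m.div h1m one_ne_zero).const_mul ((2:ℝ) ^ (2 * H - 1))).sub_const 1
    norm_num at this
    exact this
  refine hlim.congr' ?_
  filter_upwards [self_mem_nhdsWithin, h1m.eventually_ne one_ne_zero] with θ hθ hne
  have hθ0 : (0:ℝ) < θ := hθ
  have ha : (0:ℝ) < m * θ := mul_pos hm hθ0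
  set a := m * θ with hadef
  have hapow : (0:ℝ) < a ^ (2 * H) := Real.rpow_pos_of_pos ha _
  have h2apow : ((2:ℝ) * a) ^ (2 * H) = 2 ^ (2 * H) * a ^ (2 * H) :=
    Real.mul_rpow (by norm_num) (le_of_lt ha)
  -- N x = 2 - h x equals numerator of F
  have hNdef : ∀ x : ℝ, 2 - h x =
      (2 * Real.sinh (x / 2)) ^ (2 * H) - 2 * (Real.cosh (H * x) - 1) := by
    intro x; rw [hh x]; ring
  have hFa : F a = (2 - h a) / a ^ (2 * H) := by rw [hF, hNdef]
  have hF2a : F (2 * a) = (2 - h (2 * a)) / (2 * a) ^ (2 * H) := by rw [hF, hNdef]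
  have hNa : 2 - h a ≠ 0 := fun h0 => hne (by rw [hFa, h0, zero_div])
  have hN2a : 2 - h (2 * a) = (2 * a) ^ (2 * H) * F (2 * a) := by
    rw [hF2a]
    field_simp
  have h2ma : 2 * m * θ = 2 * a := by rw [hadef]; ring
  rw [h2ma]
  have hfin : (2 - h (2 * a)) / (4 - 2 * h a) =
      (2:ℝ) ^ (2 * H - 1) * (F (2 * a) / F a) := by
    rw [hN2a, hFa, h2apow, Real.rpow_sub (by norm_num : (0:ℝ) < 2), Real.rpow_one]
    have h4 : 4 - 2 * h a = 2 * (2 - h a) := by ring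
    rw [h4]
    have h2pow : (0:ℝ) < (2:ℝ) ^ (2 * H) := Real.rpow_pos_of_pos (by norm_num) _
    field_simp
  rw [hfin]
end
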